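/- arXiv:1108.1938 — 3 statements merged into one kernel-verified Lean document; each statement's English description precedes it below -/
import Mathlib

section
/- Let χ = (χ₀,…,χₙ) and χ' = (χ'₀,…,χ'ₙ) be weight vectors such that the normalization N(χ) is a permutation of the normalization N(χ'). Then the weighted projective spaces ℙ(χ) and ℙ(χ') are homeomorphic. -/
noncomputable section

/-- The unit sphere `S^{2n+1} ⊂ ℂ^{n+1}`. -/
def USphere (n : ℕ) : Type := {z : Fin (n + 1) → ℂ // ∑ i, Complex.normSq (z i) = 1}

instance (n : ℕ) : TopologicalSpace (USphere n) :=
  instTopologicalSpaceSubtype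

/-- The weighted `S¹`-action equivalence relation on the unit sphere. -/
def wpSetoid (n : ℕ) (χ : Fin (n + 1) → ℕ) : Setoid (USphere n) where
  r z w := ∃ g : ℂ, ‖g‖ = 1 ∧ ∀ i, g ^ χ i * z.1 i = w.1 i
  iseqv := by
    constructor
    · exact fun z => ⟨1, by simp⟩
    · rintro z w ⟨g, hg, h⟩
      have hg0 : g ≠ 0 := by
        intro h0; rw [h0] at hg; simp at hg
      refine ⟨g⁻¹, by simp [hg], fun i => ?_⟩
      rw [← h i, ← mul_assoc, ← mul_pow, inv_mul_cancel₀ hg0, one_pow, one_mul]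
    · rintro x y z ⟨g, hg, h⟩ ⟨g', hg', h'⟩
      refine ⟨g' * g, by simp [hg, hg'], fun i => ?_⟩
      rw [← h' i, ← h i, ← mul_assoc, mul_pow]

/-- The weighted projective space `ℙ(χ)` as the quotient of the unit sphere by the
weighted circle action, with the quotient topology. -/
def WProj (n : ℕ) (χ : Fin (n + 1) → ℕ) : Type := Quotient (wpSetoid n χ)

instance (n : ℕ) (χ : Fin (n + 1) → ℕ) : TopologicalSpace (WProj n χ) :=
  instTopologicalSpaceQuotient

/-- The second-smallest element of a multiset of naturals (for a singleton multiset we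
take its unique element, corresponding to normalizing a single weight to `1`). -/
def secondMin (s : Multiset ℕ) : ℕ :=
  (s.sort (· ≤ ·)).getD 1 ((s.sort (· ≤ ·)).getD 0 0)

/-- `b_p(χ)`: the second-smallest `p`-adic valuation among the weights. -/
def bval (p : ℕ) {n : ℕ} (χ : Fin (n + 1) → ℕ) : ℕ :=
  secondMin (Finset.univ.val.map fun i => (χ i).factorization p)

/-- The normalization `N(χ)` of a weight vector, characterized by
`v_p(N(χ)_i) = max (v_p(χ_i) - b_p(χ)) 0` for all primes `p`. -/
def normalizeWt {n : ℕ} (χ : Fin (n + 1) → ℕ) : Fin (n + 1) → ℕ :=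
  fun i => ∏ p ∈ (χ i).primeFactors, p ^ ((χ i).factorization p - bval p χ)

end
namespace WP

open Complex

variable {n : ℕ}

lemma normSq_one_of_abs {g : ℂ} (hg : ‖g‖ = 1) : normSq g = 1 := by
  rw [normSq_eq_norm_sq, hg, one_pow]

/-- The weighted action of a unit complex number on the sphere. -/
def act (χ : Fin (n + 1) → ℕ) (g : ℂ) (hg : ‖g‖ = 1) (z : USphere n) : USphere n :=
  ⟨fun i => g ^ χ i * z.1 i, by
    have hz := z.2
    simp only [Complex.normSq_mul, map_pow, normSq_one_of_abs hg, one_pow, one_mul]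
    exact hz⟩

lemma continuous_act (χ : Fin (n + 1) → ℕ) (g : ℂ) (hg : ‖g‖ = 1) :
    Continuous (act χ g hg) := by
  apply Continuous.subtype_mk
  exact continuous_pi fun i =>
    continuous_const.mul ((continuous_apply i).comp continuous_subtype_val)

instance : T2Space (USphere n) :=
  inferInstanceAs (T2Space {z : Fin (n + 1) → ℂ // ∑ i, Complex.normSq (z i) = 1})

instance : CompactSpace (USphere n) := by
  have : IsCompact {z : Fin (n + 1) → ℂ | ∑ i, Complex.normSq (z i) = 1} := by
    apply Metric.isCompact_of_isClosed_isBounded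
    · have : Continuous fun z : Fin (n + 1) → ℂ => ∑ i, Complex.normSq (z i) :=
        continuous_finset_sum _ fun i _ => Complex.continuous_normSq.comp (continuous_apply i)
      exact isClosed_singleton.preimage this
    · rw [Metric.isBounded_iff_subset_closedBall 0]
      refine ⟨1, fun z hz => ?_⟩
      simp only [Set.mem_setOf_eq] at hz
      rw [Metric.mem_closedBall, dist_zero_right]
      rw [pi_norm_le_iff_of_nonneg zero_le_one]
      intro i
      have h1 : Complex.normSq (z i) ≤ 1 := by
        rw [← hz]
        exact Finset.single_le_sum (fun j _ => Complex.normSq_nonneg (z j)) (Finset.mem_univ i)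
      rw [Complex.norm_def]
      nlinarith [Real.sq_sqrt (Complex.normSq_nonneg (z i)),
        Real.sqrt_nonneg (Complex.normSq (z i))]
  exact isCompact_iff_compactSpace.mp this

lemma act_mem_act {χ : Fin (n + 1) → ℕ} {g : ℂ} (hg : ‖g‖ = 1) (z : USphere n) :
    (wpSetoid n χ).r (act χ g hg z) z := by
  have hg0 : g ≠ 0 := by intro h0; rw [h0] at hg; simp at hg
  refine ⟨g⁻¹, by simp [hg], fun i => ?_⟩
  show g⁻¹ ^ χ i * (g ^ χ i * z.1 i) = z.1 i
  rw [← mul_assoc, ← mul_pow, inv_mul_cancel₀ hg0, one_pow, one_mul]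

lemma isOpenMap_mk (χ : Fin (n + 1) → ℕ) :
    IsOpenMap (Quotient.mk (wpSetoid n χ)) := by
  intro U hU
  have key : Quotient.mk (wpSetoid n χ) ⁻¹' (Quotient.mk (wpSetoid n χ) '' U) =
      ⋃ g : {g : ℂ // ‖g‖ = 1}, act χ g.1 g.2 ⁻¹' U := by
    ext w
    simp only [Set.mem_preimage, Set.mem_iUnion, Set.mem_image]
    constructor
    · rintro ⟨z, hz, hzw⟩
      obtain ⟨g, hg, h⟩ := Quotient.exact hzw
      have hg0 : g ≠ 0 := by intro h0; rw [h0] at hg; simp at hg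
      refine ⟨⟨g⁻¹, by simp [hg]⟩, ?_⟩
      have : act χ g⁻¹ (by simp [hg]) w = z := by
        apply Subtype.ext; funext i
        show g⁻¹ ^ χ i * w.1 i = z.1 i
        rw [← h i, ← mul_assoc, ← mul_pow, inv_mul_cancel₀ hg0, one_pow, one_mul]
      show act χ g⁻¹ _ w ∈ U
      rw [this]; exact hz
    · rintro ⟨g, hgU⟩
      exact ⟨act χ g.1 g.2 w, hgU, Quotient.sound (act_mem_act g.2 w)⟩
  have : IsOpen (Quotient.mk (wpSetoid n χ) ⁻¹' (Quotient.mk (wpSetoid n χ) '' U)) := by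
    rw [key]
    exact isOpen_iUnion fun g => hU.preimage (continuous_act χ g.1 g.2)
  exact this

lemma t2WProj (χ : Fin (n + 1) → ℕ) : T2Space (WProj n χ) := by
  rw [t2_iff_isClosed_diagonal]
  set π : USphere n → WProj n χ := Quotient.mk (wpSetoid n χ) with hπ
  have hsurj : Function.Surjective π := Quotient.mk_surjective
  have hcont : Continuous π := continuous_quotient_mk'
  have hq : Topology.IsQuotientMap (Prod.map π π) :=
    ((isOpenMap_mk χ).prodMap (isOpenMap_mk χ)).isQuotientMap (hcont.prodMap hcont)
      (hsurj.prodMap hsurj)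
  rw [← hq.isClosed_preimage]
  have habs : ∀ g : Metric.sphere (0 : ℂ) 1, ‖g.1‖ = 1 := by
    intro g
    rw [← mem_sphere_zero_iff_norm]
    exact g.2
  have key : Prod.map π π ⁻¹' Set.diagonal (WProj n χ) =
      Set.range (fun gz : Metric.sphere (0 : ℂ) 1 × USphere n =>
        ((gz.2, act χ gz.1.1 (habs gz.1) gz.2) : USphere n × USphere n)) := by
    ext ⟨z, w⟩
    simp only [Set.mem_preimage, Set.mem_range, Prod.map, Set.mem_diagonal_iff]
    constructor
    · intro h
      obtain ⟨g, hg, hgi⟩ := Quotient.exact h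
      refine ⟨⟨⟨g, by rw [mem_sphere_zero_iff_norm]; exact hg⟩, z⟩, ?_⟩
      exact Prod.ext rfl (Subtype.ext (funext fun i => hgi i))
    · rintro ⟨⟨g, z'⟩, h⟩
      rw [Prod.ext_iff] at h
      obtain ⟨h1, h2⟩ := h
      simp only at h1 h2
      rw [← h1, ← h2]
      exact (Quotient.sound (act_mem_act (habs g) z')).symm
  rw [key]
  have hcont2 : Continuous (fun gz : Metric.sphere (0 : ℂ) 1 × USphere n =>
      ((gz.2, act χ gz.1.1 (habs gz.1) gz.2) : USphere n × USphere n)) := by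
    refine Continuous.prodMk continuous_snd ?_
    apply Continuous.subtype_mk
    refine continuous_pi fun i => Continuous.mul ?_ ?_
    · exact (continuous_subtype_val.comp continuous_fst).pow _
    · exact (continuous_apply i).comp (continuous_subtype_val.comp continuous_snd)
  exact (isCompact_range hcont2).isClosed

end WP
namespace WP

variable {n : ℕ}

/-- A homeomorphism of weighted projective spaces from equivalence of the relations. -/
def homeoOfRelIff (χ₁ χ₂ : Fin (n + 1) → ℕ)
    (h : ∀ z w : USphere n, (wpSetoid n χ₁).r z w ↔ (wpSetoid n χ₂).r z w) :
    WProj n χ₁ ≃ₜ WProj n χ₂ where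
  toFun := Quotient.lift (fun z => (Quotient.mk (wpSetoid n χ₂) z : WProj n χ₂))
    (fun a b hab => Quotient.sound ((h a b).mp hab))
  invFun := Quotient.lift (fun z => (Quotient.mk (wpSetoid n χ₁) z : WProj n χ₁))
    (fun a b hab => Quotient.sound ((h a b).mpr hab))
  left_inv := by rintro ⟨z⟩; rfl
  right_inv := by rintro ⟨z⟩; rfl
  continuous_toFun := Continuous.quotient_lift continuous_quotient_mk' _
  continuous_invFun := Continuous.quotient_lift continuous_quotient_mk' _

lemma abs_eq_one_of_pow {x : ℝ} {p : ℕ} (hx : 0 ≤ x) (hp : 0 < p) (h : x ^ p = 1) : x = 1 := by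
  rcases lt_trichotomy x 1 with hlt | heq | hgt
  · have := pow_lt_one₀ hx hlt hp.ne'
    rw [h] at this; exact absurd this (lt_irrefl 1)
  · exact heq
  · have := one_lt_pow₀ hgt hp.ne'
    rw [h] at this; exact absurd this (lt_irrefl 1)

lemma exists_root (g : ℂ) (hg : ‖g‖ = 1) {p : ℕ} (hp : 0 < p) :
    ∃ h : ℂ, ‖h‖ = 1 ∧ h ^ p = g := by
  obtain ⟨h, hh⟩ := IsAlgClosed.exists_pow_nat_eq g hp
  refine ⟨h, ?_, hh⟩
  have : ‖h‖ ^ p = 1 := by rw [← norm_pow, hh, hg]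
  exact abs_eq_one_of_pow (norm_nonneg h) hp this

/-- Dividing all weights by a common divisor `p` does not change the space. -/
def homeoDiv (χ : Fin (n + 1) → ℕ) {p : ℕ} (hp : 0 < p) (h : ∀ i, p ∣ χ i) :
    WProj n χ ≃ₜ WProj n fun i => χ i / p := by
  refine homeoOfRelIff χ _ fun z w => ?_
  constructor
  · rintro ⟨g, hg, hgi⟩
    refine ⟨g ^ p, by rw [norm_pow, hg, one_pow], fun i => ?_⟩
    rw [← pow_mul, Nat.mul_div_cancel' (h i)]
    exact hgi i
  · rintro ⟨g, hg, hgi⟩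
    obtain ⟨k, hk, hkp⟩ := exists_root g hg hp
    refine ⟨k, hk, fun i => ?_⟩
    have : χ i = p * (χ i / p) := (Nat.mul_div_cancel' (h i)).symm
    rw [this, pow_mul, hkp]
    exact hgi i

/-- Permuting the weights gives homeomorphic spaces. -/
def homeoPerm (χ : Fin (n + 1) → ℕ) (σ : Equiv.Perm (Fin (n + 1))) :
    WProj n χ ≃ₜ WProj n (χ ∘ σ) := by
  have key : ∀ (z : USphere n), ∑ i, Complex.normSq (z.1 (σ i)) = 1 := by
    intro z
    rw [Fintype.sum_equiv σ _ (fun i => Complex.normSq (z.1 i)) fun i => rfl]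
    exact z.2
  have key' : ∀ (z : USphere n), ∑ i, Complex.normSq (z.1 (σ.symm i)) = 1 := by
    intro z
    rw [Fintype.sum_equiv σ.symm _ (fun i => Complex.normSq (z.1 i)) fun i => rfl]
    exact z.2
  let Φ : USphere n → USphere n := fun z => ⟨fun i => z.1 (σ i), key z⟩
  let Ψ : USphere n → USphere n := fun z => ⟨fun i => z.1 (σ.symm i), key' z⟩
  have hΦ : Continuous Φ := by
    apply Continuous.subtype_mk
    exact continuous_pi fun i => (continuous_apply (σ i)).comp continuous_subtype_val
  have hΨ : Continuous Ψ := by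
    apply Continuous.subtype_mk
    exact continuous_pi fun i => (continuous_apply (σ.symm i)).comp continuous_subtype_val
  have soundΦ : ∀ a b : USphere n, (wpSetoid n χ).r a b →
      (wpSetoid n (χ ∘ σ)).r (Φ a) (Φ b) := by
    rintro a b ⟨g, hg, hgi⟩
    exact ⟨g, hg, fun i => hgi (σ i)⟩
  have soundΨ : ∀ a b : USphere n, (wpSetoid n (χ ∘ σ)).r a b →
      (wpSetoid n χ).r (Ψ a) (Ψ b) := by
    rintro a b ⟨g, hg, hgi⟩
    refine ⟨g, hg, fun i => ?_⟩
    have := hgi (σ.symm i)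
    simpa [Function.comp] using this
  refine
    { toFun := Quotient.lift (fun z => (Quotient.mk (wpSetoid n (χ ∘ σ)) (Φ z)))
        (fun a b hab => Quotient.sound (soundΦ a b hab)),
      invFun := Quotient.lift (fun z => (Quotient.mk (wpSetoid n χ) (Ψ z)))
        (fun a b hab => Quotient.sound (soundΨ a b hab)),
      left_inv := ?_, right_inv := ?_,
      continuous_toFun := Continuous.quotient_lift (continuous_quotient_mk'.comp hΦ) _,
      continuous_invFun := Continuous.quotient_lift (continuous_quotient_mk'.comp hΨ) _ }
  · rintro ⟨z⟩
    apply congrArg (Quotient.mk (wpSetoid n χ))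
    apply Subtype.ext; funext i
    show z.1 (σ (σ.symm i)) = z.1 i
    rw [Equiv.apply_symm_apply]
  · rintro ⟨z⟩
    apply congrArg (Quotient.mk (wpSetoid n (χ ∘ σ)))
    apply Subtype.ext; funext i
    show z.1 (σ.symm (σ i)) = z.1 i
    rw [Equiv.symm_apply_apply]

end WP
namespace WP

variable {n : ℕ}

/-- The radial `p`-th power map `z ↦ z^p / ‖z‖^(p-1)`, preserving moduli. -/
noncomputable def rho (p : ℕ) (w : ℂ) : ℂ := w ^ p * (((‖w‖ : ℂ)) ^ (p - 1))⁻¹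

lemma rho_zero {p : ℕ} (hp : 0 < p) : rho p 0 = 0 := by
  simp [rho, zero_pow hp.ne']

lemma norm_rho {p : ℕ} (hp : 0 < p) (w : ℂ) : ‖rho p w‖ = ‖w‖ := by
  rcases eq_or_ne w 0 with rfl | hw
  · rw [rho_zero hp, norm_zero]
  · have hnw : (0 : ℝ) < ‖w‖ := norm_pos_iff.mpr hw
    rw [rho, norm_mul, norm_pow, norm_inv, norm_pow, Complex.norm_real,
      Real.norm_of_nonneg (norm_nonneg w)]
    have hps : ‖w‖ ^ p = ‖w‖ ^ (p - 1) * ‖w‖ := by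
      rw [← pow_succ]; congr 1; omega
    rw [hps, mul_comm (‖w‖ ^ (p - 1)) ‖w‖, mul_assoc,
      mul_inv_cancel₀ (pow_ne_zero _ hnw.ne'), mul_one]

lemma normSq_rho {p : ℕ} (hp : 0 < p) (w : ℂ) :
    Complex.normSq (rho p w) = Complex.normSq w := by
  rw [Complex.normSq_eq_norm_sq, Complex.normSq_eq_norm_sq, norm_rho hp]

lemma continuous_rho {p : ℕ} (hp : 0 < p) : Continuous (rho p) := by
  rw [continuous_iff_continuousAt]
  intro w
  rcases eq_or_ne w 0 with rfl | hw
  · rw [ContinuousAt, rho_zero hp]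
    rw [tendsto_zero_iff_norm_tendsto_zero]
    have : (fun x => ‖rho p x‖) = fun x : ℂ => ‖x‖ := funext fun x => norm_rho hp x
    rw [this]
    simpa using continuous_norm.tendsto (0 : ℂ)
  · apply ContinuousAt.mul
    · exact (continuous_pow p).continuousAt
    · apply ContinuousAt.inv₀
      · exact (ContinuousAt.pow (Complex.continuous_ofReal.continuousAt.comp
          (continuous_norm.continuousAt)) _)
      · apply pow_ne_zero
        simpa using norm_ne_zero_iff.mpr hw

lemma rho_unit_mul {p : ℕ} (u w : ℂ) (hu : ‖u‖ = 1) :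
    rho p (u * w) = u ^ p * rho p w := by
  rw [rho, rho, mul_pow, norm_mul, hu, one_mul, mul_assoc]

lemma rho_surj {p : ℕ} (hp : 0 < p) (w : ℂ) : ∃ z : ℂ, ‖z‖ = ‖w‖ ∧ rho p z = w := by
  rcases eq_or_ne w 0 with rfl | hw
  · exact ⟨0, by simp, rho_zero hp⟩
  · obtain ⟨z, hz⟩ := IsAlgClosed.exists_pow_nat_eq (w * ((‖w‖ : ℂ)) ^ (p - 1)) hp
    have hnw : (0 : ℝ) < ‖w‖ := norm_pos_iff.mpr hw
    have hnorm : ‖z‖ = ‖w‖ := by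
      have h1 : ‖z‖ ^ p = ‖w‖ ^ p := by
        rw [← norm_pow, hz, norm_mul, norm_pow, Complex.norm_real,
          Real.norm_of_nonneg (norm_nonneg w)]
        rw [← pow_succ']
        congr 1
        omega
      exact (pow_left_strictMonoOn₀ hp.ne').injOn (norm_nonneg z) (norm_nonneg w) h1
    refine ⟨z, hnorm, ?_⟩
    rw [rho, hz, hnorm, mul_assoc, mul_inv_cancel₀, mul_one]
    apply pow_ne_zero
    simpa using hnw.ne'
  
lemma rho_eq_rho {p : ℕ} (hp : 0 < p) {a b : ℂ} (h : rho p a = rho p b) :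
    ∃ ζ : ℂ, ζ ^ p = 1 ∧ b = ζ * a := by
  have hnorm : ‖a‖ = ‖b‖ := by rw [← norm_rho hp a, ← norm_rho hp b, h]
  rcases eq_or_ne a 0 with rfl | ha
  · refine ⟨1, one_pow p, ?_⟩
    have : ‖b‖ = 0 := by rw [← hnorm, norm_zero]
    rw [norm_eq_zero] at this
    rw [this, mul_zero]
  · have hna : (0 : ℝ) < ‖a‖ := norm_pos_iff.mpr ha
    have hpow : a ^ p = b ^ p := by
      have hne : (((‖a‖ : ℂ)) ^ (p - 1))⁻¹ ≠ 0 := by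
        apply inv_ne_zero
        apply pow_ne_zero
        simpa using hna.ne'
      have := h
      rw [rho, rho, ← hnorm] at this
      exact mul_right_cancel₀ hne this
    refine ⟨b / a, ?_, by field_simp⟩
    rw [div_pow, ← hpow, div_self (pow_ne_zero _ ha)]

end WP
namespace WP

variable {n : ℕ}

lemma pow_eq_of_mod {ζ : ℂ} {p : ℕ} (hζ : ζ ^ p = 1) {a b : ℕ} (hab : a % p = b % p) :
    ζ ^ a = ζ ^ b := by
  have h1 : ζ ^ a = ζ ^ (a % p) := by
    conv_lhs => rw [← Nat.mod_add_div a p, pow_add, pow_mul, hζ, one_pow, mul_one]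
  have h2 : ζ ^ b = ζ ^ (b % p) := by
    conv_lhs => rw [← Nat.mod_add_div b p, pow_add, pow_mul, hζ, one_pow, mul_one]
  rw [h1, h2, hab]

/-- The key reduction: if `p` is a prime dividing every weight except `χ j` (which it does
not divide), then dividing all the other weights by `p` gives a homeomorphic space. -/
lemma lemC (χ : Fin (n + 1) → ℕ) {p : ℕ} (hp : p.Prime) (j : Fin (n + 1))
    (hj : ¬ p ∣ χ j) (hdvd : ∀ i, i ≠ j → p ∣ χ i) :
    Nonempty (WProj n χ ≃ₜ WProj n fun i => if i = j then χ j else χ i / p) := by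
  have hp1 : 0 < p := hp.pos
  set ψ : Fin (n + 1) → ℕ := fun i => if i = j then χ j else χ i / p with hψ
  -- the sphere-level map
  have hsum : ∀ z : USphere n,
      ∑ i, Complex.normSq (if i = j then rho p (z.1 j) else z.1 i) = 1 := by
    intro z
    rw [Finset.sum_congr rfl (fun i _ => ?_)]
    · exact z.2
    · rcases eq_or_ne i j with rfl | hij
      · simp only [if_pos rfl]
        exact normSq_rho hp1 _
      · rw [if_neg hij]
  set φ : USphere n → USphere n := fun z =>
    ⟨fun i => if i = j then rho p (z.1 j) else z.1 i, hsum z⟩ with hφ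
  have hφc : Continuous φ := by
    apply Continuous.subtype_mk
    refine continuous_pi fun i => ?_
    rcases eq_or_ne i j with rfl | hij
    · simp only [if_pos rfl]
      exact (continuous_rho hp1).comp ((continuous_apply i).comp continuous_subtype_val)
    · simp only [if_neg hij]
      exact (continuous_apply i).comp continuous_subtype_val
  -- equivariance / soundness
  have sound : ∀ a b : USphere n, (wpSetoid n χ).r a b → (wpSetoid n ψ).r (φ a) (φ b) := by
    rintro a b ⟨g, hg, hgi⟩
    refine ⟨g ^ p, by rw [norm_pow, hg, one_pow], fun i => ?_⟩
    show (g ^ p) ^ ψ i * (if i = j then rho p (a.1 j) else a.1 i) =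
      (if i = j then rho p (b.1 j) else b.1 i)
    rcases eq_or_ne i j with rfl | hij
    · simp only [if_pos rfl, hψ, if_true, eq_self_iff_true]
      have h2 : rho p (g ^ χ i * a.1 i) = rho p (b.1 i) := by rw [hgi i]
      rw [rho_unit_mul _ _ (by rw [norm_pow, hg, one_pow])] at h2
      calc (g ^ p) ^ χ i * rho p (a.1 i) = (g ^ χ i) ^ p * rho p (a.1 i) := by
            rw [← pow_mul, ← pow_mul, Nat.mul_comm]
        _ = rho p (b.1 i) := h2
    · simp only [if_neg hij, hψ]
      rw [← pow_mul, Nat.mul_div_cancel' (hdvd i hij)]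
      exact hgi i
  -- the induced map on quotients
  let F : WProj n χ → WProj n ψ :=
    Quotient.lift (fun z => (Quotient.mk (wpSetoid n ψ) (φ z)))
      (fun a b hab => Quotient.sound (sound a b hab))
  have hFc : Continuous F := Continuous.quotient_lift (continuous_quotient_mk'.comp hφc) _
  -- surjectivity
  have hFsurj : Function.Surjective F := by
    rintro ⟨w⟩
    obtain ⟨zj, hzj_norm, hzj⟩ := rho_surj hp1 (w.1 j)
    have hz_mem : ∑ i, Complex.normSq (Function.update w.1 j zj i) = 1 := by
      rw [Finset.sum_congr rfl (fun i _ => ?_)]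
      · exact w.2
      · rcases eq_or_ne i j with rfl | hij
        · rw [Function.update_self]
          rw [Complex.normSq_eq_norm_sq, Complex.normSq_eq_norm_sq, hzj_norm]
        · rw [Function.update_of_ne hij]
    refine ⟨Quotient.mk (wpSetoid n χ) ⟨Function.update w.1 j zj, hz_mem⟩, ?_⟩
    show Quotient.mk (wpSetoid n ψ) (φ _) = Quotient.mk (wpSetoid n ψ) w
    apply congrArg
    apply Subtype.ext; funext i
    show (if i = j then rho p (Function.update w.1 j zj j) else Function.update w.1 j zj i)
      = w.1 i
    rcases eq_or_ne i j with rfl | hij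
    · rw [if_pos rfl, Function.update_self, hzj]
    · rw [if_neg hij, Function.update_of_ne hij]
  -- injectivity
  have hFinj : Function.Injective F := by
    rintro ⟨a⟩ ⟨b⟩ hab
    apply Quotient.sound
    obtain ⟨g, hg, hgi⟩ := Quotient.exact hab
    obtain ⟨h, hh, hhp⟩ := exists_root g hg hp1
    -- h^p = g
    have hstep : rho p (h ^ χ j * a.1 j) = rho p (b.1 j) := by
      have h1 := hgi j
      simp only [hψ, hφ, if_pos rfl] at h1
      rw [rho_unit_mul _ _ (by rw [norm_pow, hh, one_pow]),
        ← pow_mul, Nat.mul_comm, pow_mul, hhp]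
      exact h1
    obtain ⟨ζ, hζ, hζab⟩ := rho_eq_rho hp1 hstep
    -- construct the correcting root of unity
    have hcop : p.Coprime (χ j) := (Nat.Prime.coprime_iff_not_dvd hp).mpr hj
    obtain ⟨c, -, hc⟩ := Nat.exists_mul_mod_eq_one_of_coprime hcop.symm hp.one_lt
    have hζ1 : ‖ζ‖ = 1 := by
      have : ‖ζ‖ ^ p = 1 := by rw [← norm_pow, hζ, norm_one]
      exact abs_eq_one_of_pow (norm_nonneg ζ) hp1 this
    refine ⟨ζ ^ c * h, by rw [norm_mul, norm_pow, hζ1, one_pow, hh, mul_one], fun i => ?_⟩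
    rcases eq_or_ne i j with rfl | hij
    · have hzc : ζ ^ (c * χ i) = ζ := by
        have hmod : (c * χ i) % p = 1 % p := by
          rw [Nat.mul_comm, hc, Nat.mod_eq_of_lt hp.one_lt]
        calc ζ ^ (c * χ i) = ζ ^ 1 := pow_eq_of_mod hζ hmod
          _ = ζ := pow_one ζ
      show (ζ ^ c * h) ^ χ i * a.1 i = b.1 i
      rw [mul_pow, ← pow_mul, hzc, mul_assoc, ← hζab]
    · have hzc : ζ ^ (c * χ i) = 1 := by
        obtain ⟨k, hk⟩ := hdvd i hij
        rw [hk, show c * (p * k) = p * (c * k) by ring, pow_mul, hζ, one_pow]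
      show (ζ ^ c * h) ^ χ i * a.1 i = b.1 i
      rw [mul_pow, ← pow_mul, hzc, one_mul]
      have h1 := hgi i
      simp only [hψ, hφ, if_neg hij] at h1
      rw [← Nat.mul_div_cancel' (hdvd i hij), pow_mul, hhp]
      exact h1
  -- assemble
  haveI : CompactSpace (WProj n χ) := Quotient.compactSpace
  haveI : T2Space (WProj n ψ) := t2WProj ψ
  exact ⟨Continuous.homeoOfEquivCompactToT2 (f := Equiv.ofBijective F ⟨hFinj, hFsurj⟩) hFc⟩

end WP
namespace WP

lemma sort_map_mono (s : Multiset ℕ) (f : ℕ → ℕ) (hf : Monotone f) :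
    (s.map f).sort (· ≤ ·) = (s.sort (· ≤ ·)).map f := by
  have hperm : ((s.map f).sort (· ≤ ·)).Perm ((s.sort (· ≤ ·)).map f) := by
    apply Multiset.coe_eq_coe.mp
    rw [Multiset.sort_eq, ← Multiset.map_coe, Multiset.sort_eq]
  have h1 : ((s.map f).sort (· ≤ ·)).Pairwise (· ≤ ·) := Multiset.pairwise_sort _ _
  have h2 : (((s.sort (· ≤ ·)).map f)).Pairwise (· ≤ ·) :=
    List.Pairwise.map f (fun a b h => hf h) (Multiset.pairwise_sort s _)
  exact List.Perm.eq_of_pairwise' h1 h2 hperm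

lemma secondMin_map_mono (s : Multiset ℕ) (hs : s ≠ 0) (f : ℕ → ℕ) (hf : Monotone f) :
    secondMin (s.map f) = f (secondMin s) := by
  unfold secondMin
  rw [sort_map_mono s f hf]
  rcases hl : s.sort (· ≤ ·) with _ | ⟨a, _ | ⟨b, t⟩⟩
  · exfalso
    apply hs
    have := Multiset.sort_eq s (· ≤ ·)
    rw [hl] at this
    simpa using this.symm
  · simp
  · simp

lemma secondMin_mem (s : Multiset ℕ) (hs : s ≠ 0) : secondMin s ∈ s := by
  unfold secondMin
  rcases hl : s.sort (· ≤ ·) with _ | ⟨a, _ | ⟨b, t⟩⟩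
  · exfalso
    apply hs
    have := Multiset.sort_eq s (· ≤ ·)
    rw [hl] at this
    simpa using this.symm
  · have : a ∈ s.sort (· ≤ ·) := by rw [hl]; simp
    simpa using (Multiset.mem_sort _).mp this
  · have : b ∈ s.sort (· ≤ ·) := by rw [hl]; simp
    simpa using (Multiset.mem_sort _).mp this

lemma secondMin_eq_zero (s : Multiset ℕ) (h : 2 ≤ s.count 0) : secondMin s = 0 := by
  obtain ⟨t, ht⟩ := Multiset.le_iff_exists_add.mp (Multiset.le_count_iff_replicate_le.mp h)
  have hrep : Multiset.replicate 2 (0 : ℕ) = 0 ::ₘ 0 ::ₘ 0 := rfl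
  have hsort : s.sort (· ≤ ·) = 0 :: 0 :: t.sort (· ≤ ·) := by
    have hperm : (s.sort (· ≤ ·)).Perm (0 :: 0 :: t.sort (· ≤ ·)) := by
      apply Multiset.coe_eq_coe.mp
      rw [Multiset.sort_eq, ht, hrep]
      conv_lhs => rw [← Multiset.sort_eq t (· ≤ ·)]
      rfl
    have h1 : (s.sort (· ≤ ·)).Pairwise (· ≤ ·) := Multiset.pairwise_sort _ _
    have h2 : (0 :: 0 :: t.sort (· ≤ ·)).Pairwise (· ≤ ·) := by
      refine List.pairwise_cons.mpr ⟨fun b hb => Nat.zero_le b, ?_⟩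
      exact List.pairwise_cons.mpr ⟨fun b hb => Nat.zero_le b, Multiset.pairwise_sort _ _⟩
    exact List.Perm.eq_of_pairwise' h1 h2 hperm
  unfold secondMin
  rw [hsort]
  simp

end WP
namespace WP

variable {n : ℕ}

lemma factorization_normalizeWt (χ : Fin (n + 1) → ℕ) (i : Fin (n + 1)) (q : ℕ) :
    (normalizeWt χ i).factorization q = (χ i).factorization q - bval q χ := by
  unfold normalizeWt
  rw [Nat.factorization_prod
    (fun p hp => pow_ne_zero _ (Nat.prime_of_mem_primeFactors hp).pos.ne')]
  rw [Finsupp.finset_sum_apply]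
  have key : ∀ p ∈ (χ i).primeFactors,
      ((p ^ ((χ i).factorization p - bval p χ)).factorization) q
      = if p = q then (χ i).factorization q - bval q χ else 0 := by
    intro p hp
    rw [(Nat.prime_of_mem_primeFactors hp).factorization_pow, Finsupp.single_apply]
    split_ifs with h
    · subst h; rfl
    · rfl
  rw [Finset.sum_congr rfl key, Finset.sum_ite_eq' _ q _]
  split_ifs with h
  · rfl
  · have h0 : (χ i).factorization q = 0 := by
      by_contra h0
      exact h (Nat.support_factorization (χ i) ▸ Finsupp.mem_support_iff.mpr h0)
    rw [h0, Nat.zero_sub]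

lemma normalizeWt_pos (χ : Fin (n + 1) → ℕ) (i : Fin (n + 1)) : 0 < normalizeWt χ i :=
  Finset.prod_pos fun p hp => pow_pos (Nat.prime_of_mem_primeFactors hp).pos _

lemma normalizeWt_eq_self (χ : Fin (n + 1) → ℕ) (hχ : ∀ i, 0 < χ i)
    (h : ∀ p, p.Prime → bval p χ = 0) : normalizeWt χ = χ := by
  funext i
  unfold normalizeWt
  calc ∏ p ∈ (χ i).primeFactors, p ^ ((χ i).factorization p - bval p χ)
      = ∏ p ∈ (χ i).primeFactors, p ^ ((χ i).factorization p) :=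
        Finset.prod_congr rfl fun p hp => by
          rw [h p (Nat.prime_of_mem_primeFactors hp), Nat.sub_zero]
    _ = χ i := by
        rw [← Nat.support_factorization]
        exact Nat.factorization_prod_pow_eq_self (hχ i).ne'

lemma vals_ne_zero (v : Fin (n + 1) → ℕ) :
    (Finset.univ.val.map fun i => v i) ≠ 0 := by
  intro h
  rw [Multiset.map_eq_zero] at h
  have := congrArg Multiset.card h
  simp at this

lemma bval_shift (χ ψ : Fin (n + 1) → ℕ) (p : ℕ)
    (hv : ∀ i q, (ψ i).factorization q =
      (χ i).factorization q - (if q = p then 1 else 0)) (q : ℕ) :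
    bval q ψ = bval q χ - (if q = p then 1 else 0) := by
  unfold bval
  have h1 : (Finset.univ.val.map fun i => (ψ i).factorization q) =
      (Finset.univ.val.map fun i => (χ i).factorization q).map
        (fun x => x - (if q = p then 1 else 0)) := by
    rw [Multiset.map_map]
    exact Multiset.map_congr rfl fun i _ => hv i q
  rw [h1, secondMin_map_mono _ (vals_ne_zero _) _
    (fun a b hab => Nat.sub_le_sub_right hab _)]

lemma normalizeWt_shift (χ ψ : Fin (n + 1) → ℕ) (hχ : ∀ i, 0 < χ i) (hψ : ∀ i, 0 < ψ i)
    {p : ℕ} (hp : p.Prime) (hb : 1 ≤ bval p χ)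
    (hv : ∀ i q, (ψ i).factorization q =
      (χ i).factorization q - (if q = p then 1 else 0)) :
    normalizeWt ψ = normalizeWt χ := by
  funext i
  apply Nat.factorization_inj
  · exact (normalizeWt_pos ψ i).ne'
  · exact (normalizeWt_pos χ i).ne'
  · apply Finsupp.ext
    intro q
    rw [factorization_normalizeWt, factorization_normalizeWt, hv i q,
      bval_shift χ ψ p hv q]
    split_ifs with h
    · subst h; omega
    · rfl

end WP
namespace WP

variable {n : ℕ}

lemma secondMin_singleton (a : ℕ) : secondMin {a} = a := by
  have hs : ({a} : Multiset ℕ).sort (· ≤ ·) = [a] := by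
    have hperm : (({a} : Multiset ℕ).sort (· ≤ ·)).Perm [a] := by
      apply Multiset.coe_eq_coe.mp
      rw [Multiset.sort_eq]
      rfl
    exact List.Perm.eq_of_pairwise' (Multiset.pairwise_sort _ _)
      (List.pairwise_singleton _ a) hperm
  unfold secondMin
  rw [hs]
  rfl

lemma toNorm : ∀ (m : ℕ) (χ : Fin (n + 1) → ℕ), (∀ i, 0 < χ i) → (∑ i, χ i) ≤ m →
    Nonempty (WProj n χ ≃ₜ WProj n (normalizeWt χ)) := by
  intro m
  induction m with
  | zero =>
    intro χ hχ hs
    exfalso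
    have : 0 < ∑ i, χ i :=
      Finset.sum_pos (fun i _ => hχ i) ⟨0, Finset.mem_univ 0⟩
    omega
  | succ m ih =>
    intro χ hχ hs
    by_cases hB : ∃ p, p.Prime ∧ 1 ≤ bval p χ
    · obtain ⟨p, hp, hb⟩ := hB
      by_cases hall : ∀ i, p ∣ χ i
      · -- divide all weights by p
        set ψ : Fin (n + 1) → ℕ := fun i => χ i / p with hψdef
        have hψpos : ∀ i, 0 < ψ i :=
          fun i => Nat.div_pos (Nat.le_of_dvd (hχ i) (hall i)) hp.pos
        have hv : ∀ i q, (ψ i).factorization q =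
            (χ i).factorization q - (if q = p then 1 else 0) := by
          intro i q
          rw [hψdef]
          simp only
          rw [Nat.factorization_div (hall i), hp.factorization, Finsupp.tsub_apply,
            Finsupp.single_apply]
          congr 1
          simp [eq_comm]
        have hNψ : normalizeWt ψ = normalizeWt χ :=
          normalizeWt_shift χ ψ hχ hψpos hp hb hv
        have hsum : ∑ i, ψ i ≤ m := by
          have hlt : ∑ i, ψ i < ∑ i, χ i := by
            refine Finset.sum_lt_sum (fun i _ => Nat.div_le_self _ _)
              ⟨0, Finset.mem_univ 0, Nat.div_lt_self (hχ 0) hp.one_lt⟩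
          omega
        obtain ⟨e2⟩ := ih ψ hψpos hsum
        refine ⟨(homeoDiv χ hp.pos hall).trans (e2.trans ?_)⟩
        rw [hNψ]
        exact Homeomorph.refl _
      · -- divide all weights except one by p
        push_neg at hall
        obtain ⟨j, hj⟩ := hall
        have hzj : (χ j).factorization p = 0 :=
          Nat.factorization_eq_zero_of_not_dvd hj
        have hdvd : ∀ i, i ≠ j → p ∣ χ i := by
          intro i hij
          by_contra hnd
          have hzi : (χ i).factorization p = 0 :=
            Nat.factorization_eq_zero_of_not_dvd hnd
          have hcount : 2 ≤ Multiset.count 0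
              (Finset.univ.val.map fun k => (χ k).factorization p) := by
            rw [Multiset.count_map]
            rw [← Finset.filter_val]
            have h2 : 1 < (Finset.univ.filter
                (fun a : Fin (n + 1) => 0 = (χ a).factorization p)).card :=
              Finset.one_lt_card.mpr
                ⟨i, Finset.mem_filter.mpr ⟨Finset.mem_univ i, hzi.symm⟩,
                 j, Finset.mem_filter.mpr ⟨Finset.mem_univ j, hzj.symm⟩, hij⟩
            exact h2
          have : bval p χ = 0 := secondMin_eq_zero _ hcount
          omega
        have hE := lemC χ hp j hj hdvd
        set ψ : Fin (n + 1) → ℕ := fun i => if i = j then χ j else χ i / p with hψdef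
        have hψpos : ∀ i, 0 < ψ i := by
          intro i
          rw [hψdef]
          simp only
          split_ifs with h
          · exact hχ j
          · exact Nat.div_pos (Nat.le_of_dvd (hχ i) (hdvd i h)) hp.pos
        have hv : ∀ i q, (ψ i).factorization q =
            (χ i).factorization q - (if q = p then 1 else 0) := by
          intro i q
          rw [hψdef]
          rcases eq_or_ne i j with rfl | hij
          · rcases eq_or_ne q p with rfl | hqp
            · simp [hzj]
            · simp [hqp]
          · simp only [if_neg hij]
            rw [Nat.factorization_div (hdvd i hij), hp.factorization, Finsupp.tsub_apply,
              Finsupp.single_apply]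
            congr 1
            simp [eq_comm]
        have hNψ : normalizeWt ψ = normalizeWt χ :=
          normalizeWt_shift χ ψ hχ hψpos hp hb hv
        -- there is an index different from j
        have hex : ∃ i : Fin (n + 1), i ≠ j := by
          by_contra hne
          push_neg at hne
          have huniv : (Finset.univ : Finset (Fin (n + 1))) = {j} :=
            Finset.ext fun x => by simp [hne x]
          have hmult : (Finset.univ.val.map fun k => (χ k).factorization p)
              = {(χ j).factorization p} := by
            rw [huniv]
            rfl
          have : bval p χ = 0 := by
            unfold bval
            rw [hmult, secondMin_singleton, hzj]
          omega
        obtain ⟨i0, hi0⟩ := hex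
        have hsum : ∑ i, ψ i ≤ m := by
          have hlt : ∑ i, ψ i < ∑ i, χ i := by
            refine Finset.sum_lt_sum (fun i _ => ?_) ⟨i0, Finset.mem_univ i0, ?_⟩
            · rw [hψdef]; simp only
              split_ifs with h
              · subst h; exact le_rfl
              · exact Nat.div_le_self _ _
            · rw [hψdef]; simp only [if_neg hi0]
              exact Nat.div_lt_self (hχ i0) hp.one_lt
          omega
        obtain ⟨e2⟩ := ih ψ hψpos hsum
        obtain ⟨e1⟩ := hE
        refine ⟨e1.trans (e2.trans ?_)⟩
        rw [hNψ]
        exact Homeomorph.refl _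
    · push_neg at hB
      have hzero : ∀ p, p.Prime → bval p χ = 0 := by
        intro p hp
        have := hB p hp
        omega
      rw [normalizeWt_eq_self χ hχ hzero]
      exact ⟨Homeomorph.refl _⟩

end WP

/-- If the normalizations of two weight vectors agree up to a permutation,
then the corresponding weighted projective spaces are homeomorphic. -/
theorem wproj_homeomorph_of_normalization_perm
    (n : ℕ) (χ χ' : Fin (n + 1) → ℕ) (hχ : ∀ i, 0 < χ i) (hχ' : ∀ i, 0 < χ' i)
    (h : ∃ σ : Equiv.Perm (Fin (n + 1)), ∀ i, normalizeWt χ (σ i) = normalizeWt χ' i) :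
    Nonempty (WProj n χ ≃ₜ WProj n χ') := by
  obtain ⟨σ, hσ⟩ := h
  obtain ⟨E1⟩ := WP.toNorm (∑ i, χ i) χ hχ le_rfl
  obtain ⟨E2⟩ := WP.toNorm (∑ i, χ' i) χ' hχ' le_rfl
  have hperm : normalizeWt χ ∘ σ = normalizeWt χ' := funext hσ
  have E3 : WProj n (normalizeWt χ) ≃ₜ WProj n (normalizeWt χ ∘ σ) :=
    WP.homeoPerm (normalizeWt χ) σ
  rw [hperm] at E3
  exact ⟨(E1.trans E3).trans E2.symm⟩
end

section
/- For every weight vector χ = (χ₀,…,χₙ), the normalization N(χ) is a normalized weight vector and the weighted projective spaces ℙ(χ) and ℙ(N(χ)) are homeomorphic. -/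
noncomputable section Extra

lemma countP_mono' {s : Multiset ℕ} {p q : ℕ → Prop} [DecidablePred p] [DecidablePred q]
    (h : ∀ x, p x → q x) : Multiset.countP p s ≤ Multiset.countP q s := by
  rw [Multiset.countP_eq_card_filter, Multiset.countP_eq_card_filter]
  exact Multiset.card_le_card (Multiset.monotone_filter_right s h)

lemma secondMin_spec (s : Multiset ℕ) (h2 : 2 ≤ Multiset.card s) :
    2 ≤ Multiset.countP (fun y => y ≤ secondMin s) s ∧
    Multiset.countP (fun y => y < secondMin s) s ≤ 1 := by
  have hs : (s.sort (· ≤ ·) : Multiset ℕ) = s := Multiset.sort_eq s _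
  have hlen : (s.sort (· ≤ ·)).length = Multiset.card s := Multiset.length_sort _
  rcases hl : s.sort (· ≤ ·) with _ | ⟨a, _ | ⟨b, t⟩⟩
  · rw [hl] at hlen; simp at hlen; omega
  · rw [hl] at hlen; simp at hlen; omega
  · have hsorted : List.Pairwise (· ≤ ·) (s.sort (· ≤ ·)) := Multiset.pairwise_sort s _
    rw [hl] at hsorted hs
    have hab : a ≤ b := by
      rcases List.pairwise_cons.mp hsorted with ⟨h1, _⟩
      exact h1 b (by simp)
    have hbt : ∀ y ∈ t, b ≤ y := by
      rcases List.pairwise_cons.mp hsorted with ⟨_, h2'⟩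
      rcases List.pairwise_cons.mp h2' with ⟨h3, _⟩
      exact h3
    have hsm : secondMin s = b := by simp [secondMin, hl]
    rw [hsm, ← hs]
    constructor
    · rw [Multiset.coe_countP]
      simp only [List.countP_cons]
      have h1 : decide (a ≤ b) = true := by simpa using hab
      have h2 : decide (b ≤ b) = true := by simp
      simp [h1, h2]
    · rw [Multiset.coe_countP]
      simp only [List.countP_cons]
      have h0 : t.countP (fun y => decide (y < b)) = 0 := by
        rw [List.countP_eq_zero]
        intro y hy
        simpa using not_lt.mpr (hbt y hy)
      have h2 : (decide (b < b)) = false := by simp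
      simp [h0, h2]
      split <;> simp

lemma secondMin_le {s : Multiset ℕ} (h2 : 2 ≤ Multiset.card s) {x : ℕ}
    (h : 2 ≤ Multiset.countP (fun y => y ≤ x) s) : secondMin s ≤ x := by
  by_contra hc
  push_neg at hc
  have hspec := (secondMin_spec s h2).2
  have hmono : Multiset.countP (fun y => y ≤ x) s ≤
      Multiset.countP (fun y => y < secondMin s) s :=
    countP_mono' (fun y hy => lt_of_le_of_lt hy hc)
  omega

lemma le_secondMin {s : Multiset ℕ} (h2 : 2 ≤ Multiset.card s) {x : ℕ}
    (h : Multiset.countP (fun y => y < x) s ≤ 1) : x ≤ secondMin s := by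
  by_contra hc
  push_neg at hc
  have hspec := (secondMin_spec s h2).1
  have hmono : Multiset.countP (fun y => y ≤ secondMin s) s ≤
      Multiset.countP (fun y => y < x) s :=
    countP_mono' (fun y hy => lt_of_le_of_lt hy hc)
  omega


section bvalLemmas

variable {n : ℕ} {p x : ℕ} {χ : Fin (n + 1) → ℕ}

lemma countP_univ_map (q : ℕ → Prop) [DecidablePred q] (v : Fin (n + 1) → ℕ) :
    Multiset.countP q (Finset.univ.val.map v) =
      (Finset.univ.filter (fun i => q (v i))).card := by
  rw [Multiset.countP_map]
  rfl

lemma card_univ_map (v : Fin (n + 1) → ℕ) :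
    Multiset.card (Finset.univ.val.map v) = n + 1 := by
  simp

lemma bval_le (hn : 1 ≤ n) {i j : Fin (n + 1)} (hij : i ≠ j)
    (hi : (χ i).factorization p ≤ x) (hj : (χ j).factorization p ≤ x) :
    bval p χ ≤ x := by
  apply secondMin_le
  · rw [card_univ_map]; omega
  · rw [countP_univ_map]
    have hsub : ({i, j} : Finset (Fin (n + 1))) ⊆
        Finset.univ.filter (fun k => (χ k).factorization p ≤ x) := by
      intro k hk
      simp only [Finset.mem_insert, Finset.mem_singleton] at hk
      rcases hk with rfl | rfl <;> simp [hi, hj]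
    have hcard : ({i, j} : Finset (Fin (n + 1))).card = 2 := by
      rw [Finset.card_insert_of_notMem (by simpa using hij)]; simp
    calc 2 = ({i, j} : Finset (Fin (n + 1))).card := hcard.symm
    _ ≤ _ := Finset.card_le_card hsub

lemma le_bval (hn : 1 ≤ n) {j : Fin (n + 1)}
    (h : ∀ i, i ≠ j → x ≤ (χ i).factorization p) : x ≤ bval p χ := by
  apply le_secondMin
  · rw [card_univ_map]; omega
  · rw [countP_univ_map]
    have hsub : Finset.univ.filter (fun k => (χ k).factorization p < x) ⊆ {j} := by
      intro k hk
      simp only [Finset.mem_filter] at hk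
      simp only [Finset.mem_singleton]
      by_contra hkj
      exact absurd hk.2 (not_lt.mpr (h k hkj))
    calc (Finset.univ.filter (fun k => (χ k).factorization p < x)).card
        ≤ ({j} : Finset (Fin (n+1))).card := Finset.card_le_card hsub
    _ = 1 := Finset.card_singleton j

lemma exists_two_le_bval (hn : 1 ≤ n) (p : ℕ) (χ : Fin (n + 1) → ℕ) :
    ∃ i j : Fin (n + 1), i ≠ j ∧ (χ i).factorization p ≤ bval p χ ∧
      (χ j).factorization p ≤ bval p χ := by
  have h2 : 2 ≤ Multiset.card (Finset.univ.val.map fun i => (χ i).factorization p) := by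
    rw [card_univ_map]; omega
  have := (secondMin_spec _ h2).1
  rw [countP_univ_map] at this
  rw [show secondMin (Finset.univ.val.map fun i => (χ i).factorization p) = bval p χ from rfl]
    at this
  have h1 : 1 < (Finset.univ.filter
      (fun i => (χ i).factorization p ≤ bval p χ)).card := by omega
  obtain ⟨a, ha, b, hb, hab⟩ := Finset.one_lt_card.mp h1
  simp only [Finset.mem_filter] at ha hb
  exact ⟨a, b, hab, ha.2, hb.2⟩

lemma exists_bval_le (hn : 1 ≤ n) (p : ℕ) (χ : Fin (n + 1) → ℕ) :
    ∃ j : Fin (n + 1), ∀ i, i ≠ j → bval p χ ≤ (χ i).factorization p := by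
  have h2 : 2 ≤ Multiset.card (Finset.univ.val.map fun i => (χ i).factorization p) := by
    rw [card_univ_map]; omega
  have hspec := (secondMin_spec _ h2).2
  rw [countP_univ_map] at hspec
  rw [show secondMin (Finset.univ.val.map fun i => (χ i).factorization p) = bval p χ from rfl]
    at hspec
  obtain ⟨a, ha⟩ := Finset.card_le_one_iff_subset_singleton.mp hspec
  refine ⟨a, fun i hia => ?_⟩
  by_contra hc
  push_neg at hc
  have : i ∈ ({a} : Finset (Fin (n+1))) := ha (by simp [hc])
  simp at this
  exact hia this

lemma bval_congr (p : ℕ) {χ χ' : Fin (n + 1) → ℕ}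
    (h : ∀ i, (χ i).factorization p = (χ' i).factorization p) :
    bval p χ = bval p χ' := by
  unfold bval
  congr 1
  exact Multiset.map_congr rfl (fun i _ => h i)

end bvalLemmas

section normLemmas

variable {n : ℕ} {χ : Fin (n + 1) → ℕ}

lemma normalizeWt_pos (χ : Fin (n + 1) → ℕ) (i : Fin (n + 1)) : 0 < normalizeWt χ i := by
  apply Finset.prod_pos
  intro q hq
  exact pow_pos (Nat.Prime.pos (Nat.prime_of_mem_primeFactors hq)) _

lemma factorization_normalizeWt (hχi : χ i ≠ 0) (q : ℕ) :
    (normalizeWt χ i).factorization q = (χ i).factorization q - bval q χ := by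
  unfold normalizeWt
  rw [Nat.factorization_prod (fun p hp => pow_ne_zero _
    (Nat.Prime.ne_zero (Nat.prime_of_mem_primeFactors hp)))]
  rw [Finsupp.finset_sum_apply]
  have : ∀ p ∈ (χ i).primeFactors,
      (p ^ ((χ i).factorization p - bval p χ)).factorization q =
        if p = q then (χ i).factorization p - bval p χ else 0 := by
    intro p hp
    rw [Nat.Prime.factorization_pow (Nat.prime_of_mem_primeFactors hp)]
    exact Finsupp.single_apply
  rw [Finset.sum_congr rfl this, Finset.sum_ite_eq']
  by_cases hq : q ∈ (χ i).primeFactors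
  · simp [hq]
  · simp only [hq, if_false]
    have : (χ i).factorization q = 0 := by
      rw [← Nat.support_factorization] at hq
      exact Finsupp.notMem_support_iff.mp hq
    omega

lemma normalizeWt_eq_self (hn : 1 ≤ n) (hχ : ∀ i, 0 < χ i)
    (hnorm : ∀ p : ℕ, p.Prime → ∃ i j : Fin (n + 1), i ≠ j ∧ ¬ p ∣ χ i ∧ ¬ p ∣ χ j) :
    normalizeWt χ = χ := by
  funext i
  have hb : ∀ q ∈ (χ i).primeFactors, bval q χ = 0 := by
    intro q hq
    obtain ⟨a, b, hab, ha, hb⟩ := hnorm q (Nat.prime_of_mem_primeFactors hq)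
    exact Nat.le_zero.mp (bval_le hn hab
      (le_of_eq (Nat.factorization_eq_zero_of_not_dvd ha))
      (le_of_eq (Nat.factorization_eq_zero_of_not_dvd hb)))
  unfold normalizeWt
  have : ∀ q ∈ (χ i).primeFactors,
      q ^ ((χ i).factorization q - bval q χ) = q ^ (χ i).factorization q := by
    intro q hq; rw [hb q hq]; simp
  rw [Finset.prod_congr rfl this]
  calc ∏ q ∈ (χ i).primeFactors, q ^ (χ i).factorization q
      = (χ i).factorization.prod (· ^ ·) := by
        rw [Finsupp.prod, Nat.support_factorization]
    _ = χ i := Nat.factorization_prod_pow_eq_self (hχ i).ne'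

lemma normalizeWt_congr {χ' : Fin (n + 1) → ℕ} (hχ : ∀ i, 0 < χ i) (hχ' : ∀ i, 0 < χ' i)
    (h : ∀ q i, (χ i).factorization q - bval q χ = (χ' i).factorization q - bval q χ') :
    normalizeWt χ = normalizeWt χ' := by
  funext i
  apply Nat.eq_of_factorization_eq (normalizeWt_pos χ i).ne' (normalizeWt_pos χ' i).ne'
  intro q
  rw [factorization_normalizeWt (hχ i).ne', factorization_normalizeWt (hχ' i).ne']
  exact h q i

end normLemmas

section scenarioLemmas

variable {n : ℕ} {p : ℕ} {χ : Fin (n + 1) → ℕ}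

lemma fact_div_p (hp : p.Prime) {m : ℕ} (hd : p ∣ m) (q : ℕ) :
    (m / p).factorization q = m.factorization q - (if q = p then 1 else 0) := by
  rw [Nat.factorization_div hd, Finsupp.tsub_apply, Nat.Prime.factorization hp]
  congr 1
  rw [Finsupp.single_apply]
  simp [eq_comm]

lemma one_le_fact (hp : p.Prime) {m : ℕ} (hm : 0 < m) (hd : p ∣ m) :
    1 ≤ m.factorization p :=
  (Nat.Prime.factorization_pos_of_dvd hp hm.ne' hd)

lemma scenarioA (hn : 1 ≤ n) (hp : p.Prime) (hχ : ∀ i, 0 < χ i) (hall : ∀ i, p ∣ χ i) :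
    normalizeWt (fun i => χ i / p) = normalizeWt χ := by
  set χ' : Fin (n + 1) → ℕ := fun i => χ i / p with hχ'def
  have hχ'pos : ∀ i, 0 < χ' i := fun i =>
    Nat.div_pos (Nat.le_of_dvd (hχ i) (hall i)) hp.pos
  have hval : ∀ q i, (χ' i).factorization q =
      (χ i).factorization q - (if q = p then 1 else 0) :=
    fun q i => fact_div_p hp (hall i) q
  have hone : ∀ i, 1 ≤ (χ i).factorization p := fun i => one_le_fact hp (hχ i) (hall i)
  have hB1 : 1 ≤ bval p χ :=
    le_bval hn (j := 0) (fun i _ => hone i)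
  have hbp : bval p χ' = bval p χ - 1 := by
    apply le_antisymm
    · obtain ⟨a, b, hab, ha, hb⟩ := exists_two_le_bval hn p χ
      apply bval_le hn hab
      · rw [hval, if_pos rfl]; omega
      · rw [hval, if_pos rfl]; omega
    · obtain ⟨j, hjall⟩ := exists_bval_le hn p χ
      apply le_bval hn (j := j)
      intro i hij
      rw [hval]
      rw [if_pos rfl]
      have := hjall i hij
      omega
  have hbq : ∀ q, q ≠ p → bval q χ' = bval q χ := by
    intro q hq
    apply bval_congr
    intro i
    rw [hval]
    simp [hq]
  apply normalizeWt_congr hχ'pos hχ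
  intro q i
  by_cases hq : q = p
  · subst hq
    rw [hval, hbp]
    rw [if_pos rfl]
    have := hone i
    omega
  · rw [hval, hbq q hq]
    simp [hq]

lemma scenarioB (hn : 1 ≤ n) (hp : p.Prime) (hχ : ∀ i, 0 < χ i) {j : Fin (n + 1)}
    (hj : ¬ p ∣ χ j) (hd : ∀ i, i ≠ j → p ∣ χ i) :
    normalizeWt (Function.update (fun i => χ i / p) j (χ j)) = normalizeWt χ := by
  set χ'' : Fin (n + 1) → ℕ := Function.update (fun i => χ i / p) j (χ j) with hdef
  have happ : ∀ i, χ'' i = if i = j then χ j else χ i / p := by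
    intro i
    rw [hdef, Function.update_apply]
  have hχ''pos : ∀ i, 0 < χ'' i := by
    intro i
    rw [happ]
    split
    · exact hχ j
    · next h => exact Nat.div_pos (Nat.le_of_dvd (hχ i) (hd i h)) hp.pos
  have hvj : (χ j).factorization p = 0 := Nat.factorization_eq_zero_of_not_dvd hj
  have hone : ∀ i, i ≠ j → 1 ≤ (χ i).factorization p :=
    fun i hij => one_le_fact hp (hχ i) (hd i hij)
  have hval : ∀ q i, (χ'' i).factorization q =
      if i = j then (χ j).factorization q
      else (χ i).factorization q - (if q = p then 1 else 0) := by
    intro q i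
    rw [happ]
    split
    · next h => subst h; rfl
    · next h => exact fact_div_p hp (hd i h) q
  have hB1 : 1 ≤ bval p χ := le_bval hn (j := j) (fun i hij => hone i hij)
  have hBlow : ∀ i, i ≠ j → bval p χ ≤ (χ i).factorization p := by
    obtain ⟨j', hj'⟩ := exists_bval_le hn p χ
    intro i hij
    by_cases hjj : j' = j
    · exact hj' i (hjj ▸ hij)
    · have := hj' j (fun h => hjj h.symm)
      rw [hvj] at this
      omega
  have hbp : bval p χ'' = bval p χ - 1 := by
    apply le_antisymm
    · obtain ⟨a, b, hab, ha, hb⟩ := exists_two_le_bval hn p χ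
      -- pick one of a, b different from j
      rcases ne_or_eq a j with haj | haj
      · apply bval_le hn (i := a) (j := j) haj
        · rw [hval]; rw [if_neg haj, if_pos rfl]
          have := hone a haj; omega
        · rw [hval]; rw [if_pos rfl, hvj]; omega
      · subst haj
        apply bval_le hn (i := b) (j := a) (fun h => hab h.symm)
        · rw [hval]; rw [if_neg (fun h => hab h.symm), if_pos rfl]
          have := hone b (fun h => hab h.symm); omega
        · rw [hval]; rw [if_pos rfl, hvj]; omega
    · apply le_bval hn (j := j)
      intro i hij
      rw [hval]
      rw [if_neg hij, if_pos rfl]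
      have := hBlow i hij
      omega
  have hbq : ∀ q, q ≠ p → bval q χ'' = bval q χ := by
    intro q hq
    apply bval_congr
    intro i
    rw [hval]
    split
    · next h => subst h; rfl
    · simp [hq]
  apply normalizeWt_congr hχ''pos hχ
  intro q i
  by_cases hq : q = p
  · subst hq
    rw [hval, hbp]
    by_cases hij : i = j
    · subst hij
      rw [if_pos rfl, hvj]
      omega
    · rw [if_neg hij, if_pos rfl]
      have := hone i hij
      omega
  · rw [hval, hbq q hq]
    by_cases hij : i = j
    · subst hij; simp
    · simp [hij, hq]

end scenarioLemmas


-- ### Topology basics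

section Topo

variable {n : ℕ}

lemma continuous_sumNormSq :
    Continuous (fun z : Fin (n + 1) → ℂ => ∑ i, Complex.normSq (z i)) := by
  apply continuous_finset_sum
  intro i _
  exact Complex.continuous_normSq.comp (continuous_apply i)

instance USphere.t2Space : T2Space (USphere n) :=
  inferInstanceAs (T2Space {z : Fin (n + 1) → ℂ // ∑ i, Complex.normSq (z i) = 1})

instance USphere.compactSpace : CompactSpace (USphere n) := by
  have : IsCompact {z : Fin (n + 1) → ℂ | ∑ i, Complex.normSq (z i) = 1} := by
    apply Metric.isCompact_of_isClosed_isBounded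
    · exact isClosed_eq continuous_sumNormSq continuous_const
    · apply Metric.isBounded_iff_subset_closedBall (0 : Fin (n+1) → ℂ) |>.mpr
      refine ⟨1, fun z hz => ?_⟩
      simp only [Set.mem_setOf_eq] at hz
      simp only [Metric.mem_closedBall, dist_zero_right]
      rw [pi_norm_le_iff_of_nonneg zero_le_one]
      intro i
      have h1 : Complex.normSq (z i) ≤ 1 := by
        rw [← hz]
        exact Finset.single_le_sum (fun j _ => Complex.normSq_nonneg (z j)) (Finset.mem_univ i)
      have := Complex.sq_norm (z i)
      have h2 : ‖z i‖ = ‖z i‖ := rfl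
      nlinarith [norm_nonneg (z i)]
  exact isCompact_iff_compactSpace.mp this

instance WProj.compactSpace (χ : Fin (n + 1) → ℕ) : CompactSpace (WProj n χ) :=
  Quotient.compactSpace

/-- The circle action on the sphere. -/
def wact (χ : Fin (n + 1) → ℕ) (g : ℂ) (hg : ‖g‖ = 1) (z : USphere n) :
    USphere n :=
  ⟨fun i => g ^ χ i * z.1 i, by
    have hns : Complex.normSq g = 1 := by
      rw [Complex.normSq_eq_norm_sq, hg, one_pow]
    have : ∀ i, Complex.normSq (g ^ χ i * z.1 i) = Complex.normSq (z.1 i) := by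
      intro i
      rw [Complex.normSq_mul, map_pow, hns, one_pow, one_mul]
    rw [Finset.sum_congr rfl (fun i _ => this i)]
    exact z.2⟩

lemma continuous_wact_pair (χ : Fin (n + 1) → ℕ) :
    Continuous (fun gz : {g : ℂ // ‖g‖ = 1} × USphere n =>
      wact χ gz.1.1 gz.1.2 gz.2) := by
  apply Continuous.subtype_mk
  apply continuous_pi
  intro i
  exact ((continuous_subtype_val.comp continuous_fst).pow _).mul
    ((continuous_apply i).comp (continuous_subtype_val.comp continuous_snd))

instance circle.compactSpace : CompactSpace {g : ℂ // ‖g‖ = 1} := by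
  have : IsCompact {g : ℂ | ‖g‖ = 1} := by
    apply Metric.isCompact_of_isClosed_isBounded
    · exact isClosed_eq continuous_norm continuous_const
    · apply Metric.isBounded_iff_subset_closedBall (0 : ℂ) |>.mpr
      refine ⟨1, fun g hg => ?_⟩
      simp only [Set.mem_setOf_eq] at hg
      simp [Metric.mem_closedBall, dist_zero_right, hg]
  exact isCompact_iff_compactSpace.mp this

lemma isClosed_wpRel (χ : Fin (n + 1) → ℕ) :
    IsClosed {zw : USphere n × USphere n | (wpSetoid n χ) zw.1 zw.2} := by
  have : {zw : USphere n × USphere n | (wpSetoid n χ) zw.1 zw.2} =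
      Set.range (fun gz : {g : ℂ // ‖g‖ = 1} × USphere n =>
        (gz.2, wact χ gz.1.1 gz.1.2 gz.2)) := by
    ext ⟨z, w⟩
    constructor
    · rintro ⟨g, hg, h⟩
      refine ⟨(⟨g, hg⟩, z), ?_⟩
      simp only [Prod.mk.injEq]
      refine ⟨trivial, ?_⟩
      apply Subtype.ext
      funext i
      exact h i
    · rintro ⟨⟨⟨g, hg⟩, z'⟩, heq⟩
      injection heq with h1 h2
      subst h1
      exact ⟨g, hg, fun i => congrFun (congrArg Subtype.val h2) i⟩
  rw [this]
  exact (isCompact_range (Continuous.prodMk continuous_snd (continuous_wact_pair χ))).isClosed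

lemma isOpenMap_wpmk (χ : Fin (n + 1) → ℕ) :
    IsOpenMap (Quotient.mk (wpSetoid n χ)) := by
  intro U hU
  rw [isOpen_coinduced]
  have : Quotient.mk (wpSetoid n χ) ⁻¹' (Quotient.mk (wpSetoid n χ) '' U) =
      ⋃ g : {g : ℂ // ‖g‖ = 1}, (wact χ g.1 g.2) ⁻¹' U := by
    ext z
    simp only [Set.mem_preimage, Set.mem_image, Set.mem_iUnion]
    constructor
    · rintro ⟨u, hu, huz⟩
      have hrel : (wpSetoid n χ) u z := Quotient.exact huz
      obtain ⟨g, hg, h⟩ := hrel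
      -- u = wact g⁻¹ z ... rather: wact (g⁻¹) z = u
      have hg0 : g ≠ 0 := by intro h0; rw [h0] at hg; simp at hg
      refine ⟨⟨g⁻¹, by simp [hg]⟩, ?_⟩
      have : wact χ g⁻¹ (by simp [hg]) z = u := by
        apply Subtype.ext
        funext i
        show g⁻¹ ^ χ i * z.1 i = u.1 i
        rw [← h i, ← mul_assoc, ← mul_pow, inv_mul_cancel₀ hg0, one_pow, one_mul]
      rw [this]
      exact hu
    · rintro ⟨⟨g, hg⟩, hzU⟩
      refine ⟨wact χ g hg z, hzU, ?_⟩
      apply Quotient.sound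
      have hg0 : g ≠ 0 := by intro h0; rw [h0] at hg; simp at hg
      refine ⟨g⁻¹, by simp [hg], fun i => ?_⟩
      show g⁻¹ ^ χ i * (g ^ χ i * z.1 i) = z.1 i
      rw [← mul_assoc, ← mul_pow, inv_mul_cancel₀ hg0, one_pow, one_mul]
  show IsOpen (Quotient.mk (wpSetoid n χ) ⁻¹' (Quotient.mk (wpSetoid n χ) '' U))
  rw [this]
  exact isOpen_iUnion (fun g => hU.preimage (by
    apply Continuous.subtype_mk
    apply continuous_pi
    intro i
    exact continuous_const.mul ((continuous_apply i).comp continuous_subtype_val)))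

instance WProj.t2Space (χ : Fin (n + 1) → ℕ) : T2Space (WProj n χ) := by
  constructor
  intro x y hxy
  obtain ⟨z, rfl⟩ := Quotient.exists_rep x
  obtain ⟨w, rfl⟩ := Quotient.exists_rep y
  have hnr : (z, w) ∉ {zw : USphere n × USphere n | (wpSetoid n χ) zw.1 zw.2} := by
    intro h
    exact hxy (Quotient.sound h)
  have hopen : IsOpen {zw : USphere n × USphere n | (wpSetoid n χ) zw.1 zw.2}ᶜ :=
    (isClosed_wpRel χ).isOpen_compl
  obtain ⟨U, V, hUo, hVo, hzU, hwV, hUV⟩ := isOpen_prod_iff.mp hopen z w hnr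
  refine ⟨Quotient.mk _ '' U, Quotient.mk _ '' V,
    isOpenMap_wpmk χ U hUo, isOpenMap_wpmk χ V hVo,
    ⟨z, hzU, rfl⟩, ⟨w, hwV, rfl⟩, ?_⟩
  rw [Set.disjoint_left]
  rintro c ⟨u, hu, huc⟩ ⟨v, hv, hvc⟩
  have : (wpSetoid n χ) u v := Quotient.exact (huc.trans hvc.symm)
  exact hUV (Set.mk_mem_prod hu hv) this

end Topo

section LemmaB

variable {n : ℕ}

lemma abs_eq_one_of_pow {g : ℂ} {d : ℕ} (hd : d ≠ 0) (h : ‖g‖ ^ d = 1) :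
    ‖g‖ = 1 := by
  have h0 : 0 ≤ ‖g‖ := norm_nonneg g
  rcases lt_trichotomy ‖g‖ 1 with hlt | heq | hgt
  · have := pow_lt_one₀ h0 hlt hd
    rw [h] at this
    exact absurd this (lt_irrefl 1)
  · exact heq
  · have := one_lt_pow₀ hgt hd
    rw [h] at this
    exact absurd this (lt_irrefl 1)

lemma zeta_pow_of_dvd {ζ : ℂ} {p : ℕ} (hζ : ζ ^ p = 1) {m : ℕ} (hm : p ∣ m) :
    ζ ^ m = 1 := by
  obtain ⟨k, rfl⟩ := hm
  rw [pow_mul, hζ, one_pow]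

lemma zeta_pow_of_mod {ζ : ℂ} {p : ℕ} (hζ : ζ ^ p = 1) {m : ℕ} (hm : m % p = 1) :
    ζ ^ m = ζ := by
  conv_lhs => rw [← Nat.div_add_mod m p]
  rw [pow_add, pow_mul, hζ, one_pow, one_mul, hm, pow_one]

lemma normSq_real_mul (x : ℝ) (y : ℂ) :
    Complex.normSq ((x : ℂ) * y) = x ^ 2 * Complex.normSq y := by
  rw [Complex.normSq_mul, Complex.normSq_ofReal, sq]

/-- auxiliary real lemma for injectivity -/
lemma pow_fix_aux {x y : ℝ} {p : ℕ} (hp : p ≠ 0) (hx : 0 ≤ x) (hx1 : x ≤ 1)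
    (hy : 0 ≤ y) (hy1 : y ≤ 1)
    (heq : (1 - x) * y ^ p = (1 - y) * x ^ p) : x = y := by
  rcases lt_trichotomy x y with hlt | h | hgt
  · exfalso
    have h1 : x ^ p < y ^ p := pow_lt_pow_left₀ hlt hx hp
    have h4 : 0 < y ^ p := pow_pos (lt_of_le_of_lt hx hlt) p
    have e1 : 0 ≤ (1 - y) * (y ^ p - x ^ p) := mul_nonneg (by linarith) (by linarith)
    have e2 : 0 < (y - x) * y ^ p := mul_pos (by linarith) h4
    nlinarith [e1, e2]
  · exact h
  · exfalso
    have h1 : y ^ p < x ^ p := pow_lt_pow_left₀ hgt hy hp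
    have h4 : 0 < x ^ p := pow_pos (lt_of_le_of_lt hy hgt) p
    have e1 : 0 ≤ (1 - x) * (x ^ p - y ^ p) := mul_nonneg (by linarith) (by linarith)
    have e2 : 0 < (x - y) * x ^ p := mul_pos (by linarith) h4
    nlinarith [e1, e2]

/-- the `j`-th-coordinate `p`-th power map on the sphere (before renormalizing). -/
def vvF (p : ℕ) (j : Fin (n + 1)) (z : USphere n) : Fin (n + 1) → ℂ :=
  fun i => if i = j then (z.1 i) ^ p else z.1 i

def NvF (p : ℕ) (j : Fin (n + 1)) (z : USphere n) : ℝ :=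
  ∑ i, Complex.normSq (vvF p j z i)

lemma NvF_pos (p : ℕ) (j : Fin (n + 1)) (z : USphere n) : 0 < NvF p j z := by
  have hex : ∃ i, z.1 i ≠ 0 := by
    by_contra hc
    push_neg at hc
    have : ∑ i, Complex.normSq (z.1 i) = 0 := by
      apply Finset.sum_eq_zero
      intro i _
      rw [hc i]
      simp
    rw [z.2] at this
    exact one_ne_zero this
  obtain ⟨i, hi⟩ := hex
  apply Finset.sum_pos'
  · intro k _
    exact Complex.normSq_nonneg _
  · refine ⟨i, Finset.mem_univ i, ?_⟩
    apply Complex.normSq_pos.mpr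
    unfold vvF
    split
    · exact pow_ne_zero _ hi
    · exact hi

/-- the induced map on the sphere. -/
def Fmap (p : ℕ) (j : Fin (n + 1)) (z : USphere n) : USphere n :=
  ⟨fun i => ((Real.sqrt (NvF p j z))⁻¹ : ℝ) * vvF p j z i, by
    have hpos := NvF_pos p j z
    have : ∀ i, Complex.normSq (((Real.sqrt (NvF p j z))⁻¹ : ℝ) * vvF p j z i) =
        ((Real.sqrt (NvF p j z))⁻¹) ^ 2 * Complex.normSq (vvF p j z i) :=
      fun i => normSq_real_mul _ _
    rw [Finset.sum_congr rfl (fun i _ => this i), ← Finset.mul_sum]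
    show ((Real.sqrt (NvF p j z))⁻¹) ^ 2 * NvF p j z = 1
    rw [← Real.sqrt_inv, Real.sq_sqrt (inv_nonneg.mpr hpos.le)]
    exact inv_mul_cancel₀ hpos.ne'⟩

lemma continuous_Fmap (p : ℕ) (j : Fin (n + 1)) : Continuous (Fmap (n := n) p j) := by
  have hvv : ∀ i, Continuous (fun z : USphere n => vvF p j z i) := by
    intro i
    unfold vvF
    by_cases hij : i = j
    · simp only [hij, if_pos rfl]
      exact ((continuous_apply j).comp continuous_subtype_val).pow p
    · simp only [hij, if_false]
      exact (continuous_apply i).comp continuous_subtype_val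
  have hNv : Continuous (fun z : USphere n => NvF p j z) := by
    apply continuous_finset_sum
    intro i _
    exact Complex.continuous_normSq.comp (hvv i)
  apply Continuous.subtype_mk
  apply continuous_pi
  intro i
  apply Continuous.mul
  · apply Complex.continuous_ofReal.comp
    apply Continuous.inv₀
    · exact Real.continuous_sqrt.comp hNv
    · intro z
      exact (Real.sqrt_pos.mpr (NvF_pos p j z)).ne'
  · exact hvv i

end LemmaB

section LemmaB2

variable {n : ℕ} {p : ℕ} {χ : Fin (n + 1) → ℕ} {j : Fin (n + 1)}

lemma vvF_act {z w : USphere n} {g : ℂ}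
    (h : ∀ i, g ^ χ i * z.1 i = w.1 i) :
    ∀ i, g ^ (Function.update χ j (p * χ j) i) * vvF p j z i = vvF p j w i := by
  intro i
  unfold vvF
  by_cases hij : i = j
  · subst hij
    rw [if_pos rfl, if_pos rfl, Function.update_self, ← h i, mul_pow, ← pow_mul,
      mul_comm (χ i) p]
  · rw [if_neg hij, if_neg hij, Function.update_of_ne hij]
    exact h i

lemma NvF_act {z w : USphere n} {g : ℂ} (hg : ‖g‖ = 1)
    (hk : ∀ i, g ^ (Function.update χ j (p * χ j) i) * vvF p j z i = vvF p j w i) :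
    NvF p j w = NvF p j z := by
  unfold NvF
  apply Finset.sum_congr rfl
  intro i _
  rw [← hk i, Complex.normSq_mul, map_pow]
  have h1 : Complex.normSq g = 1 := by rw [Complex.normSq_eq_norm_sq, hg, one_pow]
  rw [h1, one_pow, one_mul]

lemma Fmap_descent {z w : USphere n} (hrel : (wpSetoid n χ) z w) :
    (wpSetoid n (Function.update χ j (p * χ j))) (Fmap p j z) (Fmap p j w) := by
  obtain ⟨g, hg, h⟩ := hrel
  have hk := vvF_act (χ := χ) (p := p) (j := j) h
  have hN := NvF_act hg hk
  refine ⟨g, hg, fun i => ?_⟩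
  show g ^ (Function.update χ j (p * χ j) i) *
      (((Real.sqrt (NvF p j z))⁻¹ : ℝ) * vvF p j z i) =
      ((Real.sqrt (NvF p j w))⁻¹ : ℝ) * vvF p j w i
  rw [hN, ← hk i]
  ring

lemma Fmap_surj (hp : p ≠ 0) (w : USphere n) : ∃ z : USphere n, Fmap p j z = w := by
  set B := Complex.normSq (w.1 j) with hB
  set A := ∑ i ∈ Finset.univ.erase j, Complex.normSq (w.1 i) with hA
  have hAB : A + B = 1 := by
    rw [hA, hB, Finset.sum_erase_add _ _ (Finset.mem_univ j)]
    exact w.2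
  have hA0 : 0 ≤ A := Finset.sum_nonneg fun i _ => Complex.normSq_nonneg _
  have hB0 : 0 ≤ B := Complex.normSq_nonneg _
  obtain ⟨u, hu⟩ := IsAlgClosed.exists_pow_nat_eq (w.1 j) (Nat.pos_of_ne_zero hp)
  set a := Complex.normSq u with ha
  have hap : a ^ p = B := by rw [ha, hB, ← map_pow, hu]
  have ha0 : 0 ≤ a := Complex.normSq_nonneg _
  have hB1 : B ≤ 1 := by linarith
  have haB : B ≤ a := by
    by_contra hc
    push_neg at hc
    have ha1 : a ≤ 1 := le_trans hc.le hB1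
    have h2 : a ^ p ≤ a := pow_le_of_le_one ha0 ha1 hp
    rw [hap] at h2
    linarith
  have hcont : Continuous (fun c : ℝ => c ^ (2 * p) * A + c ^ 2 * a) :=
    ((continuous_pow _).mul continuous_const).add ((continuous_pow 2).mul continuous_const)
  have h2p : 2 * p ≠ 0 := by omega
  have h0 : (0 : ℝ) ^ (2 * p) * A + (0 : ℝ) ^ 2 * a = 0 := by
    rw [zero_pow h2p]
    norm_num
  have h1 : 1 ≤ (1 : ℝ) ^ (2 * p) * A + (1 : ℝ) ^ 2 * a := by
    rw [one_pow, one_pow]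
    linarith
  obtain ⟨c, hc01, hc⟩ : ∃ c ∈ Set.Icc (0 : ℝ) 1, c ^ (2 * p) * A + c ^ 2 * a = 1 := by
    have hsub := intermediate_value_Icc (by norm_num : (0:ℝ) ≤ 1) hcont.continuousOn
    have hmem : (1 : ℝ) ∈ Set.Icc ((0:ℝ) ^ (2*p) * A + (0:ℝ)^2 * a)
        ((1:ℝ) ^ (2*p) * A + (1:ℝ)^2 * a) := by
      constructor
      · rw [h0]; norm_num
      · exact h1
    obtain ⟨c, hc01, hc⟩ := hsub hmem
    exact ⟨c, hc01, hc⟩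
  have hc0 : 0 ≤ c := hc01.1
  have hcne : c ≠ 0 := by
    intro h0c
    rw [h0c] at hc
    rw [zero_pow h2p, zero_pow (by norm_num : (2:ℕ) ≠ 0)] at hc
    norm_num at hc
  have hcpos : 0 < c := lt_of_le_of_ne hc0 (Ne.symm hcne)
  have hcp : (0:ℝ) < c ^ p := pow_pos hcpos p
  have hz2 : ∑ i : Fin (n + 1), Complex.normSq
      (if i = j then (c : ℂ) * u else ((c ^ p : ℝ) : ℂ) * w.1 i) = 1 := by
    rw [← Finset.sum_erase_add _ _ (Finset.mem_univ j)]
    have hterm : ∀ i ∈ Finset.univ.erase j,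
        Complex.normSq (if i = j then (c : ℂ) * u else ((c ^ p : ℝ) : ℂ) * w.1 i)
          = (c ^ p) ^ 2 * Complex.normSq (w.1 i) := by
      intro i hi
      rw [if_neg (Finset.ne_of_mem_erase hi), normSq_real_mul]
    rw [Finset.sum_congr rfl hterm, ← Finset.mul_sum, if_pos rfl, normSq_real_mul]
    calc (c ^ p) ^ 2 * A + c ^ 2 * Complex.normSq u
        = c ^ (2 * p) * A + c ^ 2 * a := by rw [← pow_mul, mul_comm p 2, ha]
      _ = 1 := hc
  set z : USphere n := ⟨fun i => if i = j then (c : ℂ) * u else ((c ^ p : ℝ) : ℂ) * w.1 i, hz2⟩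
    with hzdef
  refine ⟨z, ?_⟩
  have hvv : ∀ i, vvF p j z i = ((c ^ p : ℝ) : ℂ) * w.1 i := by
    intro i
    unfold vvF
    by_cases hij : i = j
    · subst hij
      rw [if_pos rfl]
      show (if i = i then (c : ℂ) * u else ((c ^ p : ℝ) : ℂ) * w.1 i) ^ p = _
      rw [if_pos rfl, mul_pow, hu]
      norm_cast
    · rw [if_neg hij]
      show (if i = j then (c : ℂ) * u else ((c ^ p : ℝ) : ℂ) * w.1 i) = _
      rw [if_neg hij]
  have hNv : NvF p j z = (c ^ p) ^ 2 := by
    unfold NvF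
    rw [Finset.sum_congr rfl (fun i _ => by rw [hvv i, normSq_real_mul]), ← Finset.mul_sum,
      w.2, mul_one]
  apply Subtype.ext
  funext i
  show ((Real.sqrt (NvF p j z))⁻¹ : ℝ) * vvF p j z i = w.1 i
  rw [hNv, Real.sqrt_sq hcp.le, hvv i, ← mul_assoc, ← Complex.ofReal_mul,
    inv_mul_cancel₀ hcp.ne', Complex.ofReal_one, one_mul]

lemma Fmap_inj (hp : p.Prime) (hj : ¬ p ∣ χ j) (hd : ∀ i, i ≠ j → p ∣ χ i)
    {z z' : USphere n}
    (hrel : (wpSetoid n (Function.update χ j (p * χ j))) (Fmap p j z) (Fmap p j z')) :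
    (wpSetoid n χ) z z' := by
  obtain ⟨g, hg, h⟩ := hrel
  have hg0 : g ≠ 0 := by intro h0; rw [h0] at hg; simp at hg
  have hgn : Complex.normSq g = 1 := by rw [Complex.normSq_eq_norm_sq, hg, one_pow]
  set χ' := Function.update χ j (p * χ j) with hχ'
  set Nz := NvF p j z with hNzdef
  set Nz' := NvF p j z' with hNz'def
  have hNzpos : 0 < Nz := NvF_pos p j z
  have hNz'pos : 0 < Nz' := NvF_pos p j z'
  set sz := (Real.sqrt Nz)⁻¹ with hszdef
  set sz' := (Real.sqrt Nz')⁻¹ with hsz'def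
  have hszpos : 0 < sz := inv_pos.mpr (Real.sqrt_pos.mpr hNzpos)
  have hsz'pos : 0 < sz' := inv_pos.mpr (Real.sqrt_pos.mpr hNz'pos)
  have h' : ∀ i, g ^ χ' i * ((sz : ℝ) * vvF p j z i) = (sz' : ℝ) * vvF p j z' i := h
  have hns : ∀ i, sz ^ 2 * Complex.normSq (vvF p j z i)
      = sz' ^ 2 * Complex.normSq (vvF p j z' i) := by
    intro i
    have e := congrArg Complex.normSq (h' i)
    rw [Complex.normSq_mul, Complex.normSq_mul, Complex.normSq_mul, map_pow, hgn, one_pow,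
      one_mul, Complex.normSq_ofReal, Complex.normSq_ofReal, ← sq, ← sq] at e
    exact e
  set a := Complex.normSq (z.1 j) with hadef
  set a' := Complex.normSq (z'.1 j) with ha'def
  have ha0 : 0 ≤ a := Complex.normSq_nonneg _
  have ha'0 : 0 ≤ a' := Complex.normSq_nonneg _
  have herase : ∑ i ∈ Finset.univ.erase j, Complex.normSq (z.1 i) = 1 - a := by
    have := Finset.sum_erase_add Finset.univ (fun i => Complex.normSq (z.1 i))
      (Finset.mem_univ j)
    rw [z.2] at this
    linarith
  have herase' : ∑ i ∈ Finset.univ.erase j, Complex.normSq (z'.1 i) = 1 - a' := by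
    have := Finset.sum_erase_add Finset.univ (fun i => Complex.normSq (z'.1 i))
      (Finset.mem_univ j)
    rw [z'.2] at this
    linarith
  have ha1 : a ≤ 1 := by
    have := Finset.sum_nonneg (s := Finset.univ.erase j)
      (fun i (_ : i ∈ Finset.univ.erase j) => Complex.normSq_nonneg (z.1 i))
    linarith [herase]
  have ha'1 : a' ≤ 1 := by
    have := Finset.sum_nonneg (s := Finset.univ.erase j)
      (fun i (_ : i ∈ Finset.univ.erase j) => Complex.normSq_nonneg (z'.1 i))
    linarith [herase']
  have hvve : ∀ i, i ≠ j → vvF p j z i = z.1 i := by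
    intro i hij; unfold vvF; rw [if_neg hij]
  have hvve' : ∀ i, i ≠ j → vvF p j z' i = z'.1 i := by
    intro i hij; unfold vvF; rw [if_neg hij]
  have hvvj : vvF p j z j = (z.1 j) ^ p := by unfold vvF; rw [if_pos rfl]
  have hvvj' : vvF p j z' j = (z'.1 j) ^ p := by unfold vvF; rw [if_pos rfl]
  have hsum : sz ^ 2 * (1 - a) = sz' ^ 2 * (1 - a') := by
    have e : ∑ i ∈ Finset.univ.erase j, sz ^ 2 * Complex.normSq (vvF p j z i)
        = ∑ i ∈ Finset.univ.erase j, sz' ^ 2 * Complex.normSq (vvF p j z' i) :=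
      Finset.sum_congr rfl (fun i _ => hns i)
    rw [← Finset.mul_sum, ← Finset.mul_sum] at e
    have es : ∑ i ∈ Finset.univ.erase j, Complex.normSq (vvF p j z i)
        = ∑ i ∈ Finset.univ.erase j, Complex.normSq (z.1 i) :=
      Finset.sum_congr rfl (fun i hi => by rw [hvve i (Finset.ne_of_mem_erase hi)])
    have es' : ∑ i ∈ Finset.univ.erase j, Complex.normSq (vvF p j z' i)
        = ∑ i ∈ Finset.univ.erase j, Complex.normSq (z'.1 i) :=
      Finset.sum_congr rfl (fun i hi => by rw [hvve' i (Finset.ne_of_mem_erase hi)])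
    rw [es, es', herase, herase'] at e
    exact e
  have hjrel : sz ^ 2 * a ^ p = sz' ^ 2 * a' ^ p := by
    have e := hns j
    rw [hvvj, hvvj', map_pow, map_pow] at e
    exact e
  have key : (1 - a) * a' ^ p = (1 - a') * a ^ p := by
    have e : sz ^ 2 * ((1 - a) * a' ^ p) = sz ^ 2 * ((1 - a') * a ^ p) := by
      calc sz ^ 2 * ((1 - a) * a' ^ p) = (sz ^ 2 * (1 - a)) * a' ^ p := by ring
        _ = (sz' ^ 2 * (1 - a')) * a' ^ p := by rw [hsum]
        _ = (1 - a') * (sz' ^ 2 * a' ^ p) := by ring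
        _ = (1 - a') * (sz ^ 2 * a ^ p) := by rw [← hjrel]
        _ = sz ^ 2 * ((1 - a') * a ^ p) := by ring
    exact mul_left_cancel₀ (pow_ne_zero 2 hszpos.ne') e
  have haa : a = a' := pow_fix_aux hp.ne_zero ha0 ha1 ha'0 ha'1 key
  have hNN : Nz = Nz' := by
    have es : ∑ i ∈ Finset.univ.erase j, Complex.normSq (vvF p j z i)
        = ∑ i ∈ Finset.univ.erase j, Complex.normSq (z.1 i) :=
      Finset.sum_congr rfl (fun i hi => by rw [hvve i (Finset.ne_of_mem_erase hi)])
    have es' : ∑ i ∈ Finset.univ.erase j, Complex.normSq (vvF p j z' i)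
        = ∑ i ∈ Finset.univ.erase j, Complex.normSq (z'.1 i) :=
      Finset.sum_congr rfl (fun i hi => by rw [hvve' i (Finset.ne_of_mem_erase hi)])
    have e1 : Nz = (1 - a) + a ^ p := by
      rw [hNzdef]
      unfold NvF
      rw [← Finset.sum_erase_add _ _ (Finset.mem_univ j), es, herase, hvvj, map_pow]
    have e2 : Nz' = (1 - a') + a' ^ p := by
      rw [hNz'def]
      unfold NvF
      rw [← Finset.sum_erase_add _ _ (Finset.mem_univ j), es', herase', hvvj', map_pow]
    rw [e1, e2, haa]
  have hss : sz = sz' := by rw [hszdef, hsz'def, hNN]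
  have hszC : ((sz' : ℝ) : ℂ) ≠ 0 := by
    simp only [ne_eq, Complex.ofReal_eq_zero]
    exact hsz'pos.ne'
  have hvv : ∀ i, g ^ χ' i * vvF p j z i = vvF p j z' i := by
    intro i
    have e := h' i
    rw [hss] at e
    have e2 : ((sz' : ℝ) : ℂ) * (g ^ χ' i * vvF p j z i) = ((sz' : ℝ) : ℂ) * vvF p j z' i := by
      rw [← e]; ring
    exact mul_left_cancel₀ hszC e2
  have hne : ∀ i, i ≠ j → g ^ χ i * z.1 i = z'.1 i := by
    intro i hij
    have e := hvv i
    rw [hvve i hij, hvve' i hij, hχ', Function.update_of_ne hij] at e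
    exact e
  have hjj : g ^ (p * χ j) * (z.1 j) ^ p = (z'.1 j) ^ p := by
    have e := hvv j
    rw [hvvj, hvvj', hχ', Function.update_self] at e
    exact e
  by_cases hzj : z.1 j = 0
  · have hz'j : z'.1 j = 0 := by
      have e := hjj
      rw [hzj, zero_pow hp.ne_zero, mul_zero] at e
      exact (pow_eq_zero_iff hp.ne_zero).mp e.symm
    refine ⟨g, hg, fun i => ?_⟩
    by_cases hij : i = j
    · subst hij
      rw [hzj, hz'j, mul_zero]
    · exact hne i hij
  · set cden := g ^ χ j * z.1 j with hcden
    have hcden0 : cden ≠ 0 := mul_ne_zero (pow_ne_zero _ hg0) hzj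
    have hcdenp : cden ^ p = (z'.1 j) ^ p := by
      rw [hcden, mul_pow, ← pow_mul, mul_comm (χ j) p]
      exact hjj
    set ζ := z'.1 j * cden⁻¹ with hζ
    have hζp : ζ ^ p = 1 := by
      rw [hζ, mul_pow, inv_pow, ← hcdenp, mul_inv_cancel₀ (pow_ne_zero _ hcden0)]
    have habsζ : ‖ζ‖ = 1 :=
      abs_eq_one_of_pow hp.ne_zero (by rw [← norm_pow, hζp, norm_one])
    obtain ⟨m, -, hm⟩ := Nat.exists_mul_mod_eq_one_of_coprime
      (((Nat.Prime.coprime_iff_not_dvd hp).mpr hj).symm) hp.one_lt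
    refine ⟨ζ ^ m * g, by rw [norm_mul, norm_pow, habsζ, one_pow, one_mul, hg], fun i => ?_⟩
    by_cases hij : i = j
    · subst hij
      rw [mul_pow, ← pow_mul, mul_assoc]
      have hmod : (m * χ i) % p = 1 := by rw [mul_comm]; exact hm
      rw [zeta_pow_of_mod hζp hmod]
      show ζ * cden = z'.1 i
      rw [hζ, mul_assoc, inv_mul_cancel₀ hcden0, mul_one]
    · rw [mul_pow, ← pow_mul, zeta_pow_of_dvd hζp (Dvd.dvd.mul_left (hd i hij) m), one_mul]
      exact hne i hij

end LemmaB2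

section Assembly

variable {n : ℕ}

lemma lemmaB_homeo {p : ℕ} {χ : Fin (n + 1) → ℕ} {j : Fin (n + 1)}
    (hp : p.Prime) (hj : ¬ p ∣ χ j) (hd : ∀ i, i ≠ j → p ∣ χ i) :
    Nonempty (WProj n χ ≃ₜ WProj n (Function.update χ j (p * χ j))) := by
  set χ' := Function.update χ j (p * χ j) with hχ'
  have hdesc : ∀ z w : USphere n, (wpSetoid n χ) z w →
      (Quotient.mk (wpSetoid n χ') (Fmap p j z)) = (Quotient.mk (wpSetoid n χ') (Fmap p j w)) :=
    fun z w hzw => Quotient.sound (Fmap_descent hzw)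
  set Φ : WProj n χ → WProj n χ' :=
    Quotient.lift (fun z => Quotient.mk (wpSetoid n χ') (Fmap p j z)) hdesc with hΦ
  have hcont : Continuous Φ :=
    (continuous_quotient_mk'.comp (continuous_Fmap p j)).quotient_lift hdesc
  have hsurj : Function.Surjective Φ := by
    intro q
    obtain ⟨w, rfl⟩ := Quotient.exists_rep q
    obtain ⟨z, hz⟩ := Fmap_surj (j := j) hp.ne_zero w
    exact ⟨Quotient.mk _ z, by rw [hΦ]; exact congrArg _ hz⟩
  have hinj : Function.Injective Φ := by
    intro q1 q2 hq
    obtain ⟨z, rfl⟩ := Quotient.exists_rep q1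
    obtain ⟨z', rfl⟩ := Quotient.exists_rep q2
    have hrel : (wpSetoid n χ') (Fmap p j z) (Fmap p j z') := Quotient.exact hq
    exact Quotient.sound (Fmap_inj hp hj hd hrel)
  exact ⟨Continuous.homeoOfEquivCompactToT2 (f := Equiv.ofBijective Φ ⟨hinj, hsurj⟩) hcont⟩

lemma wpSetoid_mul_left (d : ℕ) (hd : d ≠ 0) (χ : Fin (n + 1) → ℕ) :
    wpSetoid n (fun i => d * χ i) = wpSetoid n χ := by
  apply Setoid.ext
  intro z w
  constructor
  · rintro ⟨g, hg, h⟩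
    refine ⟨g ^ d, by rw [norm_pow, hg, one_pow], fun i => ?_⟩
    rw [← pow_mul]
    exact h i
  · rintro ⟨g, hg, h⟩
    obtain ⟨g', hg'⟩ := IsAlgClosed.exists_pow_nat_eq g (Nat.pos_of_ne_zero hd)
    have habs : ‖g'‖ = 1 := abs_eq_one_of_pow hd (by rw [← norm_pow, hg', hg])
    refine ⟨g', habs, fun i => ?_⟩
    rw [pow_mul, hg']
    exact h i

lemma wproj_homeo_of_setoid_eq {χ χ' : Fin (n + 1) → ℕ}
    (h : wpSetoid n χ = wpSetoid n χ') :
    Nonempty (WProj n χ ≃ₜ WProj n χ') := by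
  have h1 : ∀ z w : USphere n, (wpSetoid n χ) z w →
      Quotient.mk (wpSetoid n χ') z = Quotient.mk (wpSetoid n χ') w :=
    fun z w hzw => Quotient.sound (h ▸ hzw)
  have h2 : ∀ z w : USphere n, (wpSetoid n χ') z w →
      Quotient.mk (wpSetoid n χ) z = Quotient.mk (wpSetoid n χ) w :=
    fun z w hzw => Quotient.sound (h.symm ▸ hzw)
  refine ⟨{
      toFun := Quotient.lift (fun z => Quotient.mk (wpSetoid n χ') z) h1
      invFun := Quotient.lift (fun z => Quotient.mk (wpSetoid n χ) z) h2
      left_inv := ?_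
      right_inv := ?_
      continuous_toFun := continuous_quotient_mk'.quotient_lift h1
      continuous_invFun := continuous_quotient_mk'.quotient_lift h2 }⟩
  · intro q
    obtain ⟨z, rfl⟩ := Quotient.exists_rep q
    rfl
  · intro q
    obtain ⟨z, rfl⟩ := Quotient.exists_rep q
    rfl

end Assembly

theorem main_aux (n : ℕ) (hn : 1 ≤ n) :
    ∀ N : ℕ, ∀ χ : Fin (n + 1) → ℕ, (∑ i, χ i) ≤ N → (∀ i, 0 < χ i) →
      (∀ p : ℕ, p.Prime → ∃ i j : Fin (n + 1), i ≠ j ∧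
          ¬ p ∣ normalizeWt χ i ∧ ¬ p ∣ normalizeWt χ j) ∧
      Nonempty (WProj n χ ≃ₜ WProj n (normalizeWt χ)) := by
  intro N
  induction N with
  | zero =>
    intro χ hsum hpos
    exfalso
    have h1 := hpos 0
    have h2 : χ 0 ≤ ∑ i, χ i :=
      Finset.single_le_sum (fun i _ => Nat.zero_le _) (Finset.mem_univ 0)
    omega
  | succ N ih =>
    intro χ hsum hpos
    by_cases hnorm : ∀ p : ℕ, p.Prime → ∃ i j : Fin (n + 1), i ≠ j ∧ ¬ p ∣ χ i ∧ ¬ p ∣ χ j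
    · have heq : normalizeWt χ = χ := normalizeWt_eq_self hn hpos hnorm
      rw [heq]
      exact ⟨hnorm, ⟨Homeomorph.refl _⟩⟩
    · push_neg at hnorm
      obtain ⟨p, hp, hbad⟩ := hnorm
      by_cases hall : ∀ i, p ∣ χ i
      · -- case (a): divide everything by p
        set χ'' : Fin (n + 1) → ℕ := fun i => χ i / p with hχ''
        have hpos'' : ∀ i, 0 < χ'' i := fun i =>
          Nat.div_pos (Nat.le_of_dvd (hpos i) (hall i)) hp.pos
        have hlt : ∑ i, χ'' i < ∑ i, χ i :=
          Finset.sum_lt_sum (fun i _ => Nat.div_le_self _ _)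
            ⟨0, Finset.mem_univ 0, Nat.div_lt_self (hpos 0) hp.one_lt⟩
        have hsum'' : ∑ i, χ'' i ≤ N := by omega
        have hNeq : normalizeWt χ'' = normalizeWt χ := scenarioA hn hp hpos hall
        have hhomeo : Nonempty (WProj n χ ≃ₜ WProj n χ'') := by
          apply wproj_homeo_of_setoid_eq
          have hre : (fun i => p * χ'' i) = χ :=
            funext fun i => Nat.mul_div_cancel' (hall i)
          calc wpSetoid n χ = wpSetoid n (fun i => p * χ'' i) := by rw [hre]
            _ = wpSetoid n χ'' := wpSetoid_mul_left p hp.ne_zero _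
        obtain ⟨hprop, ⟨e⟩⟩ := ih χ'' hsum'' hpos''
        rw [← hNeq]
        exact ⟨hprop, hhomeo.elim fun e0 => ⟨e0.trans e⟩⟩
      · -- case (b): unique index j not divisible by p
        push_neg at hall
        obtain ⟨j, hj⟩ := hall
        have hd : ∀ i, i ≠ j → p ∣ χ i := fun i hij =>
          hbad j i (fun h => hij h.symm) hj
        set χ'' : Fin (n + 1) → ℕ := Function.update (fun i => χ i / p) j (χ j) with hχ''
        have happ : ∀ i, χ'' i = if i = j then χ j else χ i / p := fun i =>
          Function.update_apply _ j (χ j) i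
        have hpos'' : ∀ i, 0 < χ'' i := by
          intro i
          rw [happ]
          split
          · exact hpos j
          · next h => exact Nat.div_pos (Nat.le_of_dvd (hpos i) (hd i h)) hp.pos
        have hex : ∃ i₀ : Fin (n + 1), i₀ ≠ j := by
          by_cases hj0 : j = ⟨0, Nat.succ_pos n⟩
          · refine ⟨⟨1, by omega⟩, ?_⟩
            rw [hj0]
            intro hc
            have := congrArg Fin.val hc
            simp at this
          · exact ⟨⟨0, Nat.succ_pos n⟩, fun hc => hj0 hc.symm⟩
        obtain ⟨i₀, hi₀⟩ := hex
        have hlt : ∑ i, χ'' i < ∑ i, χ i := by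
          apply Finset.sum_lt_sum
          · intro i _
            rw [happ]
            split
            · next h => subst h; exact le_refl _
            · exact Nat.div_le_self _ _
          · refine ⟨i₀, Finset.mem_univ i₀, ?_⟩
            rw [happ, if_neg hi₀]
            exact Nat.div_lt_self (hpos i₀) hp.one_lt
        have hsum'' : ∑ i, χ'' i ≤ N := by omega
        have hNeq : normalizeWt χ'' = normalizeWt χ := scenarioB hn hp hpos hj hd
        have hhomeo1 : Nonempty (WProj n χ ≃ₜ WProj n (Function.update χ j (p * χ j))) :=
          lemmaB_homeo hp hj hd
        have hhomeo2 : Nonempty (WProj n (Function.update χ j (p * χ j)) ≃ₜ WProj n χ'') := by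
          apply wproj_homeo_of_setoid_eq
          have hre : (fun i => p * χ'' i) = Function.update χ j (p * χ j) := by
            funext i
            rw [happ, Function.update_apply]
            by_cases hij : i = j
            · rw [if_pos hij, if_pos hij]
            · rw [if_neg hij, if_neg hij, Nat.mul_div_cancel' (hd i hij)]
          calc wpSetoid n (Function.update χ j (p * χ j))
              = wpSetoid n (fun i => p * χ'' i) := by rw [hre]
            _ = wpSetoid n χ'' := wpSetoid_mul_left p hp.ne_zero _
        obtain ⟨hprop, ⟨e⟩⟩ := ih χ'' hsum'' hpos''
        rw [← hNeq]
        obtain ⟨e1⟩ := hhomeo1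
        obtain ⟨e2⟩ := hhomeo2
        exact ⟨hprop, ⟨(e1.trans e2).trans e⟩⟩


end Extra

/-- The normalization `N(χ)` of a weight vector is a normalized weight vector
(for every prime `p`, at least two of its entries are not divisible by `p`), and `ℙ(χ)` is
homeomorphic to `ℙ(N(χ))`. -/
theorem normalizeWt_normalized_and_homeomorph
    (n : ℕ) (hn : 1 ≤ n) (χ : Fin (n + 1) → ℕ) (hχ : ∀ i, 0 < χ i) :
    (∀ p : ℕ, p.Prime → ∃ i j : Fin (n + 1), i ≠ j ∧
        ¬ p ∣ normalizeWt χ i ∧ ¬ p ∣ normalizeWt χ j) ∧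
    Nonempty (WProj n χ ≃ₜ WProj n (normalizeWt χ)) := by
  exact main_aux n hn (∑ i, χ i) χ le_rfl hχ
end

section
/- Let χ = (χ₀,…,χₙ) be a weight vector with χ₀ = 1. Then the open subset U = {[z₀:…:zₙ] ∈ ℙ(χ) : z₀ ≠ 0} is homeomorphic to ℂⁿ, and its complement ℙ(χ) ∖ U is the image of {z : z₀ = 0}, which is canonically homeomorphic to the weighted projective space ℙ(χ₁,…,χₙ). -/
noncomputable section

/-- `ℂ^{n+1} ∖ {0}`. -/
def CPts (n : ℕ) : Type := {z : Fin (n + 1) → ℂ // z ≠ 0}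

instance (n : ℕ) : TopologicalSpace (CPts n) := instTopologicalSpaceSubtype

/-- The weighted `ℂ^×`-action equivalence relation on `ℂ^{n+1} ∖ {0}`:
`z ∼ w` iff `w = g·z = (g^{χ₀}z₀, …, g^{χₙ}zₙ)` for some `g ∈ ℂ^×`. -/
def cpSetoid (n : ℕ) (χ : Fin (n + 1) → ℕ) : Setoid (CPts n) where
  r z w := ∃ g : ℂ, g ≠ 0 ∧ ∀ i, g ^ χ i * z.1 i = w.1 i
  iseqv := by
    constructor
    · exact fun z => ⟨1, one_ne_zero, by simp⟩
    · rintro z w ⟨g, hg, h⟩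
      refine ⟨g⁻¹, inv_ne_zero hg, fun i => ?_⟩
      rw [← h i, ← mul_assoc, ← mul_pow, inv_mul_cancel₀ hg, one_pow, one_mul]
    · rintro x y z ⟨g, hg, h⟩ ⟨g', hg', h'⟩
      refine ⟨g' * g, mul_ne_zero hg' hg, fun i => ?_⟩
      rw [← h' i, ← h i, ← mul_assoc, mul_pow]

/-- Weighted projective space realized as the quotient of `ℂ^{n+1} ∖ {0}` by the weighted
`ℂ^×`-action, with the quotient topology. -/
def CProj (n : ℕ) (χ : Fin (n + 1) → ℕ) : Type := Quotient (cpSetoid n χ)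

instance (n : ℕ) (χ : Fin (n + 1) → ℕ) : TopologicalSpace (CProj n χ) :=
  instTopologicalSpaceQuotient

end

noncomputable section AuxWP

open Topology

variable {m : ℕ}

/-- The action of a nonzero scalar on `ℂ^{m+1} ∖ {0}`. -/
def cpAct (χ : Fin (m + 1) → ℕ) (g : ℂ) (hg : g ≠ 0) (z : CPts m) : CPts m :=
  ⟨fun i => g ^ χ i * z.1 i, by
    intro h
    apply z.2
    funext i
    have hi : g ^ χ i * z.1 i = 0 := by simpa using congrFun h i
    exact (mul_eq_zero.1 hi).resolve_left (pow_ne_zero _ hg)⟩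

lemma continuous_cpAct (χ : Fin (m + 1) → ℕ) (g : ℂ) (hg : g ≠ 0) :
    Continuous (cpAct χ g hg) := by
  apply Continuous.subtype_mk
  exact continuous_pi fun i =>
    continuous_const.mul ((continuous_apply i).comp continuous_subtype_val)

lemma cpMk_act (χ : Fin (m + 1) → ℕ) (g : ℂ) (hg : g ≠ 0) (z : CPts m) :
    Quotient.mk (cpSetoid m χ) (cpAct χ g hg z) = Quotient.mk (cpSetoid m χ) z :=
  by
    refine (Quotient.sound ?_).symm
    show ∃ g' : ℂ, g' ≠ 0 ∧ ∀ i, g' ^ χ i * z.1 i = (cpAct χ g hg z).1 i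
    exact ⟨g, hg, fun _ => rfl⟩

lemma isQuotientMap_cpMk (χ : Fin (m + 1) → ℕ) :
    IsQuotientMap (Quotient.mk (cpSetoid m χ)) :=
  isQuotientMap_quotient_mk'

lemma isOpenMap_cpMk (χ : Fin (m + 1) → ℕ) :
    IsOpenMap (Quotient.mk (cpSetoid m χ)) := by
  intro O hO
  rw [← (isQuotientMap_cpMk χ).isOpen_preimage]
  have hset : Quotient.mk (cpSetoid m χ) ⁻¹' (Quotient.mk (cpSetoid m χ) '' O)
      = ⋃ g : {g : ℂ // g ≠ 0}, cpAct χ g.1 g.2 ⁻¹' O := by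
    ext z
    simp only [Set.mem_preimage, Set.mem_image, Set.mem_iUnion]
    constructor
    · rintro ⟨o, hoO, ho⟩
      obtain ⟨g, hg, h⟩ := Quotient.exact ho
      refine ⟨⟨g⁻¹, inv_ne_zero hg⟩, ?_⟩
      have he : cpAct χ g⁻¹ (inv_ne_zero hg) z = o := by
        apply Subtype.ext; funext i
        show g⁻¹ ^ χ i * z.1 i = o.1 i
        rw [← h i, ← mul_assoc, ← mul_pow, inv_mul_cancel₀ hg, one_pow, one_mul]
      show cpAct χ g⁻¹ (inv_ne_zero hg) z ∈ O
      rw [he]; exact hoO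
    · rintro ⟨⟨g, hg⟩, hzO⟩
      exact ⟨cpAct χ g hg z, hzO, cpMk_act χ g hg z⟩
  rw [hset]
  exact isOpen_iUnion fun g => hO.preimage (continuous_cpAct χ g.1 g.2)

lemma cp_zero_iff (χ : Fin (m + 1) → ℕ) {z w : CPts m}
    (h : ∃ g : ℂ, g ≠ 0 ∧ ∀ i, g ^ χ i * z.1 i = w.1 i) (j : Fin (m + 1)) :
    z.1 j = 0 ↔ w.1 j = 0 := by
  obtain ⟨g, hg, h⟩ := h
  rw [← h j, mul_eq_zero]
  simp [pow_eq_zero_iff', hg]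

/-- The restriction of the quotient map to the subtype cut out by an invariant
predicate `P` is a quotient map onto the image subtype. -/
lemma isQuotientMap_cpRestrict (χ : Fin (m + 1) → ℕ) (P : CPts m → Prop)
    (hP : ∀ z w : CPts m, (∃ g : ℂ, g ≠ 0 ∧ ∀ i, g ^ χ i * z.1 i = w.1 i) → P z → P w) :
    IsQuotientMap (fun z : {z : CPts m // P z} =>
      (⟨Quotient.mk (cpSetoid m χ) z.1, z.1, rfl, z.2⟩ :
        {x : CProj m χ // ∃ z, Quotient.mk (cpSetoid m χ) z = x ∧ P z})) := by
  apply IsOpenMap.isQuotientMap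
  · intro W hW
    obtain ⟨O, hO, rfl⟩ := isOpen_induced_iff.1 hW
    have him : (fun z : {z : CPts m // P z} =>
        (⟨Quotient.mk (cpSetoid m χ) z.1, z.1, rfl, z.2⟩ :
          {x : CProj m χ // ∃ z, Quotient.mk (cpSetoid m χ) z = x ∧ P z})) ''
          (Subtype.val ⁻¹' O)
        = Subtype.val ⁻¹' (Quotient.mk (cpSetoid m χ) '' O) := by
      ext s
      constructor
      · rintro ⟨z, hzO, rfl⟩
        exact ⟨z.1, hzO, rfl⟩
      · rintro ⟨o, hoO, ho⟩
        obtain ⟨w, hw, hPw⟩ := s.2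
        have hrel := Quotient.exact (ho.trans hw.symm)
        have hPo : P o := hP w o ((cpSetoid m χ).symm hrel) hPw
        exact ⟨⟨o, hPo⟩, hoO, Subtype.ext ho⟩
    rw [him]
    exact (isOpenMap_cpMk χ O hO).preimage continuous_subtype_val
  · exact Continuous.subtype_mk
      ((isQuotientMap_cpMk χ).continuous.comp continuous_subtype_val) _
  · rintro ⟨x, z, rfl, hz⟩
    exact ⟨⟨z, hz⟩, rfl⟩

end AuxWP

noncomputable section ChartAux

open Topology

variable (n : ℕ) (χ : Fin (n + 2) → ℕ)

def chartPt (w : Fin (n + 1) → ℂ) : CPts (n + 1) :=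
  ⟨Fin.cons 1 w, fun h => one_ne_zero (α := ℂ) (by simpa using congrFun h 0)⟩

def invChart (h0 : χ 0 = 1) : CProj (n + 1) χ → (Fin (n + 1) → ℂ) :=
  Quotient.lift (fun z => fun i => z.1 i.succ / (z.1 0) ^ χ i.succ) (by
    rintro z w ⟨g, hg, h⟩
    funext i
    show z.1 i.succ / (z.1 0) ^ χ i.succ = w.1 i.succ / (w.1 0) ^ χ i.succ
    rw [← h i.succ, ← h 0, h0, pow_one, mul_pow,
      mul_div_mul_left _ _ (pow_ne_zero _ hg)])

def onePt : CPts n := ⟨fun _ => 1, fun h => one_ne_zero (α := ℂ) (congrFun h 0)⟩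

def consPt (w : CPts n) : CPts (n + 1) :=
  ⟨Fin.cons 0 w.1, by
    intro h
    apply w.2
    funext i
    simpa using congrFun h i.succ⟩

lemma tail_ne_zero (z : CPts (n + 1)) (hz : z.1 0 = 0) : Fin.tail z.1 ≠ 0 := by
  intro h
  apply z.2
  funext i
  refine Fin.cases ?_ (fun j => ?_) i
  · exact hz
  · exact congrFun h j

def tailProj : CProj (n + 1) χ → CProj n (fun i => χ i.succ) :=
  Quotient.lift
    (fun z => if h : Fin.tail z.1 = 0 then
        Quotient.mk (cpSetoid n fun i => χ i.succ) (onePt n)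
      else Quotient.mk (cpSetoid n fun i => χ i.succ) ⟨Fin.tail z.1, h⟩)
    (by
      rintro z w ⟨g, hg, h⟩
      have htl : ∀ i : Fin (n + 1), (z.1 i.succ = 0 ↔ w.1 i.succ = 0) := fun i =>
        cp_zero_iff χ ⟨g, hg, h⟩ i.succ
      by_cases hz : Fin.tail z.1 = 0
      · have hw : Fin.tail w.1 = 0 := funext fun i => (htl i).1 (congrFun hz i)
        exact (dif_pos hz).trans (dif_pos hw (t := fun _ =>
          Quotient.mk (cpSetoid n fun i => χ i.succ) (onePt n)) (e := fun h =>
          Quotient.mk (cpSetoid n fun i => χ i.succ) (⟨Fin.tail w.1, h⟩ : CPts n))).symm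
      · have hw : Fin.tail w.1 ≠ 0 := fun hw0 => hz
          (funext fun i => (htl i).2 (congrFun hw0 i))
        refine (dif_neg hz).trans (Eq.trans ?_ (dif_neg hw).symm)
        refine Quotient.sound ?_
        show ∃ g' : ℂ, g' ≠ 0 ∧ ∀ i : Fin (n + 1), g' ^ χ i.succ * z.1 i.succ = w.1 i.succ
        exact ⟨g, hg, fun i => h i.succ⟩)

lemma tailProj_mk (z : CPts (n + 1)) (h : Fin.tail z.1 ≠ 0) :
    tailProj n χ (Quotient.mk (cpSetoid (n + 1) χ) z)
      = Quotient.mk (cpSetoid n fun i => χ i.succ) ⟨Fin.tail z.1, h⟩ :=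
  dif_neg h

def chartEquiv (h0 : χ 0 = 1) :
    {x : CProj (n + 1) χ // ∃ z : CPts (n + 1),
        Quotient.mk (cpSetoid (n + 1) χ) z = x ∧ z.1 0 ≠ 0} ≃ (Fin (n + 1) → ℂ) where
  toFun u := invChart n χ h0 u.1
  invFun w := ⟨Quotient.mk (cpSetoid (n + 1) χ) (chartPt n w),
    chartPt n w, rfl, by simp [chartPt]⟩
  left_inv := by
    rintro ⟨x, hx⟩
    obtain ⟨z, rfl, hz0⟩ := hx
    apply Subtype.ext
    show Quotient.mk (cpSetoid (n + 1) χ)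
        (chartPt n (invChart n χ h0 (Quotient.mk (cpSetoid (n + 1) χ) z)))
      = Quotient.mk (cpSetoid (n + 1) χ) z
    refine Quotient.sound ?_
    show ∃ g : ℂ, g ≠ 0 ∧ ∀ i, g ^ χ i *
      (chartPt n (invChart n χ h0 (Quotient.mk (cpSetoid (n + 1) χ) z))).1 i = z.1 i
    refine ⟨z.1 0, hz0, fun i => ?_⟩
    refine Fin.cases ?_ (fun j => ?_) i
    · simp only [chartPt, Fin.cons_zero, h0, pow_one, mul_one]
    · simp only [chartPt, Fin.cons_succ]
      show z.1 0 ^ χ j.succ * (z.1 j.succ / z.1 0 ^ χ j.succ) = z.1 j.succ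
      rw [mul_comm, div_mul_cancel₀ _ (pow_ne_zero _ hz0)]
  right_inv := by
    intro w
    funext i
    show (Fin.cons 1 w : Fin (n + 2) → ℂ) i.succ
        / ((Fin.cons 1 w : Fin (n + 2) → ℂ) 0) ^ χ i.succ = w i
    simp

def chartHomeo (h0 : χ 0 = 1) :
    {x : CProj (n + 1) χ // ∃ z : CPts (n + 1),
        Quotient.mk (cpSetoid (n + 1) χ) z = x ∧ z.1 0 ≠ 0} ≃ₜ (Fin (n + 1) → ℂ) where
  toEquiv := chartEquiv n χ h0
  continuous_toFun := by
    have hq := isQuotientMap_cpRestrict χ (fun z => z.1 0 ≠ 0)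
      (fun z w hrel hz hw0 => hz ((cp_zero_iff χ hrel 0).2 hw0))
    rw [hq.continuous_iff]
    show Continuous fun z : {z : CPts (n + 1) // z.1 0 ≠ 0} =>
      fun i : Fin (n + 1) => z.1.1 i.succ / z.1.1 0 ^ χ i.succ
    refine continuous_pi fun i => Continuous.div₀ ?_ ?_ fun z => pow_ne_zero _ z.2
    · exact (continuous_apply i.succ).comp (continuous_subtype_val.comp continuous_subtype_val)
    · exact (((continuous_apply 0).comp (continuous_subtype_val.comp continuous_subtype_val) :
        Continuous fun z : {z : CPts (n + 1) // z.1 0 ≠ 0} => z.1.1 0)).pow _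
  continuous_invFun := by
    have hc : Continuous fun w : Fin (n + 1) → ℂ => (Fin.cons 1 w : Fin (n + 2) → ℂ) := by
      refine continuous_pi fun i => ?_
      refine Fin.cases ?_ (fun j => ?_) i
      · simp only [Fin.cons_zero]; exact continuous_const
      · simp only [Fin.cons_succ]; exact continuous_apply j
    exact Continuous.subtype_mk
      ((isQuotientMap_cpMk χ).continuous.comp (Continuous.subtype_mk hc _)) _

def tailEquiv :
    {x : CProj (n + 1) χ // ∃ z : CPts (n + 1),
        Quotient.mk (cpSetoid (n + 1) χ) z = x ∧ z.1 0 = 0} ≃ CProj n (fun i => χ i.succ) where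
  toFun s := tailProj n χ s.1
  invFun := Quotient.lift
    (fun w => ⟨Quotient.mk (cpSetoid (n + 1) χ) (consPt n w),
      consPt n w, rfl, by simp [consPt]⟩)
    (by
      rintro w w' ⟨g, hg, h⟩
      apply Subtype.ext
      show Quotient.mk (cpSetoid (n + 1) χ) (consPt n w)
        = Quotient.mk (cpSetoid (n + 1) χ) (consPt n w')
      refine Quotient.sound ?_
      show ∃ g' : ℂ, g' ≠ 0 ∧ ∀ i, g' ^ χ i * (consPt n w).1 i = (consPt n w').1 i
      refine ⟨g, hg, fun i => ?_⟩
      refine Fin.cases ?_ (fun j => ?_) i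
      · simp [consPt]
      · simpa [consPt] using h j)
  left_inv := by
    rintro ⟨x, hx⟩
    obtain ⟨z, rfl, hz0⟩ := hx
    have ht := tail_ne_zero n z hz0
    show (Quotient.lift _ _) (tailProj n χ (Quotient.mk (cpSetoid (n + 1) χ) z)) = _
    rw [tailProj_mk n χ z ht]
    apply Subtype.ext
    show Quotient.mk (cpSetoid (n + 1) χ) (consPt n ⟨Fin.tail z.1, ht⟩)
      = Quotient.mk (cpSetoid (n + 1) χ) z
    congr 1
    apply Subtype.ext
    funext i
    refine Fin.cases ?_ (fun j => ?_) i
    · simpa [consPt] using hz0.symm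
    · simp [consPt, Fin.tail]
  right_inv := by
    refine Quotient.ind fun w => ?_
    show tailProj n χ (Quotient.mk (cpSetoid (n + 1) χ) (consPt n w))
      = Quotient.mk (cpSetoid n fun i => χ i.succ) w
    have ht : Fin.tail (consPt n w).1 ≠ 0 := by
      have : Fin.tail (consPt n w).1 = w.1 := by simp [consPt]
      rw [this]; exact w.2
    rw [tailProj_mk n χ _ ht]
    rfl

def tailHomeo :
    {x : CProj (n + 1) χ // ∃ z : CPts (n + 1),
        Quotient.mk (cpSetoid (n + 1) χ) z = x ∧ z.1 0 = 0} ≃ₜ CProj n (fun i => χ i.succ) where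
  toEquiv := tailEquiv n χ
  continuous_toFun := by
    have hq := isQuotientMap_cpRestrict χ (fun z => z.1 0 = 0)
      (fun z w hrel hz => (cp_zero_iff χ hrel 0).1 hz)
    rw [hq.continuous_iff]
    have hcont : Continuous fun z : {z : CPts (n + 1) // z.1 0 = 0} =>
        Quotient.mk (cpSetoid n fun i => χ i.succ)
          (⟨Fin.tail z.1.1, tail_ne_zero n z.1 z.2⟩ : CPts n) := by
      refine Continuous.comp (isQuotientMap_cpMk _).continuous ?_
      refine Continuous.subtype_mk ?_ _
      exact continuous_pi fun i =>
        (continuous_apply i.succ).comp (continuous_subtype_val.comp continuous_subtype_val)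
    exact hcont.congr fun z => (tailProj_mk n χ z.1 (tail_ne_zero n z.1 z.2)).symm
  continuous_invFun := by
    have hcons : Continuous fun w : CPts n => (Fin.cons 0 w.1 : Fin (n + 2) → ℂ) := by
      refine continuous_pi fun i => ?_
      refine Fin.cases ?_ (fun j => ?_) i
      · simp only [Fin.cons_zero]; exact continuous_const
      · simp only [Fin.cons_succ]; exact (continuous_apply j).comp continuous_subtype_val
    apply Continuous.quotient_lift
    exact Continuous.subtype_mk
      ((isQuotientMap_cpMk χ).continuous.comp (Continuous.subtype_mk hcons _)) _

end ChartAux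

/-- If `χ₀ = 1`, then the subset `U = {[z₀:…:zₙ] : z₀ ≠ 0}` of `ℙ(χ)` is
open and homeomorphic to `ℂⁿ`; its complement is the image of `{z : z₀ = 0}` and is
canonically homeomorphic to the weighted projective space `ℙ(χ₁,…,χₙ)` (via the map
forgetting the zero-th coordinate). -/
theorem wproj_affine_chart_and_complement (n : ℕ) (χ : Fin (n + 2) → ℕ)
    (hχ : ∀ i, 0 < χ i) (h0 : χ 0 = 1) :
    IsOpen {x : CProj (n + 1) χ |
      ∃ z : CPts (n + 1), Quotient.mk (cpSetoid (n + 1) χ) z = x ∧ z.1 0 ≠ 0} ∧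
    Nonempty
      ({x : CProj (n + 1) χ // ∃ z : CPts (n + 1),
          Quotient.mk (cpSetoid (n + 1) χ) z = x ∧ z.1 0 ≠ 0} ≃ₜ (Fin (n + 1) → ℂ)) ∧
    {x : CProj (n + 1) χ |
        ∃ z : CPts (n + 1), Quotient.mk (cpSetoid (n + 1) χ) z = x ∧ z.1 0 ≠ 0}ᶜ =
      {x : CProj (n + 1) χ |
        ∃ z : CPts (n + 1), Quotient.mk (cpSetoid (n + 1) χ) z = x ∧ z.1 0 = 0} ∧
    ∃ F : ({x : CProj (n + 1) χ |
        ∃ z : CPts (n + 1), Quotient.mk (cpSetoid (n + 1) χ) z = x ∧ z.1 0 ≠ 0}ᶜ :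
          Set (CProj (n + 1) χ)) ≃ₜ CProj n (fun i => χ i.succ),
      ∀ (z : CPts (n + 1))
        (hmem : (Quotient.mk (cpSetoid (n + 1) χ) z : CProj (n + 1) χ) ∈
          {x : CProj (n + 1) χ |
            ∃ z' : CPts (n + 1), Quotient.mk (cpSetoid (n + 1) χ) z' = x ∧ z'.1 0 ≠ 0}ᶜ)
        (w : CPts n), (∀ i, w.1 i = z.1 i.succ) →
        F ⟨Quotient.mk (cpSetoid (n + 1) χ) z, hmem⟩ =
          Quotient.mk (cpSetoid n fun i => χ i.succ) w := by
  have hOpen : IsOpen {x : CProj (n + 1) χ |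
      ∃ z : CPts (n + 1), Quotient.mk (cpSetoid (n + 1) χ) z = x ∧ z.1 0 ≠ 0} := by
    refine (isQuotientMap_cpMk χ).isOpen_preimage.1 ?_
    have hpre : Quotient.mk (cpSetoid (n + 1) χ) ⁻¹' {x : CProj (n + 1) χ |
        ∃ z : CPts (n + 1), Quotient.mk (cpSetoid (n + 1) χ) z = x ∧ z.1 0 ≠ 0}
        = {z : CPts (n + 1) | z.1 0 ≠ 0} := by
      ext z
      simp only [Set.mem_preimage, Set.mem_setOf_eq]
      constructor
      · rintro ⟨z', hz', h0'⟩
        exact fun hz0 => h0' ((cp_zero_iff χ (Quotient.exact hz') 0).2 hz0)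
      · intro h
        exact ⟨z, rfl, h⟩
    refine (congrArg IsOpen hpre).mpr ?_
    exact isOpen_compl_singleton.preimage ((continuous_apply 0).comp continuous_subtype_val)
  have hC : {x : CProj (n + 1) χ |
        ∃ z : CPts (n + 1), Quotient.mk (cpSetoid (n + 1) χ) z = x ∧ z.1 0 ≠ 0}ᶜ =
      {x : CProj (n + 1) χ |
        ∃ z : CPts (n + 1), Quotient.mk (cpSetoid (n + 1) χ) z = x ∧ z.1 0 = 0} := by
    ext x
    induction x using Quotient.ind with
    | _ z =>
      show ¬ (∃ z' : CPts (n + 1), Quotient.mk (cpSetoid (n + 1) χ) z' = Quotient.mk _ z ∧ z'.1 0 ≠ 0) ↔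
        ∃ z' : CPts (n + 1), Quotient.mk (cpSetoid (n + 1) χ) z' = Quotient.mk _ z ∧ z'.1 0 = 0
      constructor
      · intro h
        by_cases hz : z.1 0 = 0
        · exact ⟨z, rfl, hz⟩
        · exact absurd ⟨z, rfl, hz⟩ h
      · rintro ⟨z', hz', h0'⟩ ⟨z'', hz'', h0''⟩
        exact h0'' ((cp_zero_iff χ (Quotient.exact (hz'.trans hz''.symm)) 0).1 h0')
  refine ⟨hOpen, ⟨chartHomeo n χ h0⟩, hC,
    (Homeomorph.setCongr hC).trans (tailHomeo n χ), ?_⟩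
  intro z hmem w hw
  have hz0 : z.1 0 = 0 := by
    have hmem' := hC ▸ hmem
    obtain ⟨z', hz', h0'⟩ := hmem'
    exact (cp_zero_iff χ (Quotient.exact hz') 0).1 h0'
  have ht : Fin.tail z.1 ≠ 0 := tail_ne_zero n z hz0
  show tailProj n χ (Quotient.mk (cpSetoid (n + 1) χ) z)
    = Quotient.mk (cpSetoid n fun i => χ i.succ) w
  rw [tailProj_mk n χ z ht]
  congr 1
  apply Subtype.ext
  funext i
  exact (hw i).symm
end
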